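/- arXiv:2001.01847 — 10 statements merged into one kernel-verified Lean document; each statement's English description precedes it below -/
import Mathlib

section
/- Let A be an n×n strictly diagonally dominant positive real matrix. Then for every column index j, the diagonal entry of the inverse satisfies A^{-1}_{jj} > 0, and it is the largest entry of its column in absolute value: A^{-1}_{jj} ≥ |A^{-1}_{ij}| for all i. -/
open Matrix Finset Real

noncomputable def rowEntropy {n : ℕ} (A : Matrix (Fin n) (Fin n) ℝ) (i : Fin n) : ℝ :=
  -∑ k, A i k * Real.logb 2 (A i k)

noncomputable def Kvec {n : ℕ} (A : Matrix (Fin n) (Fin n) ℝ) (j : Fin n) : ℝ :=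
  ∑ i, A⁻¹ j i * rowEntropy A i

noncomputable def Kmax {n : ℕ} (A : Matrix (Fin n) (Fin n) ℝ) : ℝ := ⨆ j, Kvec A j

noncomputable def Kmin {n : ℕ} (A : Matrix (Fin n) (Fin n) ℝ) : ℝ := ⨅ j, Kvec A j

def IsPmf {n : ℕ} (p : Fin n → ℝ) : Prop := (∀ i, 0 ≤ p i) ∧ ∑ i, p i = 1

noncomputable def mutualInfo {n : ℕ} (A : Matrix (Fin n) (Fin n) ℝ) (p : Fin n → ℝ) : ℝ :=
  -(∑ j, Aᵀ.mulVec p j * Real.logb 2 (Aᵀ.mulVec p j))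
    + ∑ i, ∑ j, p i * A i j * Real.logb 2 (A i j)

noncomputable def capacity {n : ℕ} (A : Matrix (Fin n) (Fin n) ℝ) : ℝ :=
  sSup {x : ℝ | ∃ p : Fin n → ℝ, IsPmf p ∧ mutualInfo A p = x}

noncomputable def qStar {n : ℕ} (A : Matrix (Fin n) (Fin n) ℝ) (j : Fin n) : ℝ :=
  (2 : ℝ) ^ (-Kvec A j) / ∑ i, (2 : ℝ) ^ (-Kvec A i)

noncomputable def pStar {n : ℕ} (A : Matrix (Fin n) (Fin n) ℝ) : Fin n → ℝ :=
  (A⁻¹)ᵀ.mulVec (qStar A)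

noncomputable def Ubound {n : ℕ} (A : Matrix (Fin n) (Fin n) ℝ) : ℝ :=
  -(∑ j, qStar A j * Real.logb 2 (qStar A j))
    + ∑ i, ∑ j, pStar A i * A i j * Real.logb 2 (A i j)

noncomputable def cmin {n : ℕ} (A : Matrix (Fin n) (Fin n) ℝ) : ℝ :=
  ⨅ i, A i i / ∑ j ∈ Finset.univ.erase i, |A i j|

noncomputable def Hmax {n : ℕ} (A : Matrix (Fin n) (Fin n) ℝ) : ℝ := ⨆ i, rowEntropy A i

noncomputable def sigmaMin {n : ℕ} (A : Matrix (Fin n) (Fin n) ℝ) : ℝ :=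
  Real.sqrt (⨅ i, (Matrix.isHermitian_conjTranspose_mul_self A).eigenvalues i)

def RowStochastic {n : ℕ} (A : Matrix (Fin n) (Fin n) ℝ) : Prop :=
  (∀ i j, 0 ≤ A i j) ∧ ∀ i, ∑ j, A i j = 1

def SDDPos {n : ℕ} (A : Matrix (Fin n) (Fin n) ℝ) : Prop :=
  (∀ i j, 0 < A i j) ∧ ∀ i, ∑ j ∈ Finset.univ.erase i, A i j < A i i

theorem inv_diag_pos_and_column_dominant {n : ℕ} (A : Matrix (Fin n) (Fin n) ℝ)
    (hA : SDDPos A) :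
    ∀ j, 0 < A⁻¹ j j ∧ ∀ i, |A⁻¹ i j| ≤ A⁻¹ j j := by
  obtain ⟨hpos, hdom⟩ := hA
  have hdet : A.det ≠ 0 := by
    apply det_ne_zero_of_sum_row_lt_diag
    intro i
    calc ∑ k ∈ Finset.univ.erase i, ‖A i k‖
        = ∑ k ∈ Finset.univ.erase i, A i k :=
          Finset.sum_congr rfl fun k _ => Real.norm_of_nonneg (hpos i k).le
      _ < A i i := hdom i
      _ = ‖A i i‖ := (Real.norm_of_nonneg (hpos i i).le).symm
  have hAB : A * A⁻¹ = 1 := Matrix.mul_nonsing_inv A (isUnit_iff_ne_zero.mpr hdet)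
  intro j
  set x : Fin n → ℝ := fun k => A⁻¹ k j with hx
  have hrow : ∀ i, ∑ k, A i k * x k = if i = j then 1 else 0 := by
    intro i
    have h := congrFun (congrFun hAB i) j
    simpa [Matrix.mul_apply, Matrix.one_apply, hx] using h
  obtain ⟨i0, _, hi0⟩ := Finset.exists_max_image Finset.univ (fun k => |x k|)
    ⟨j, Finset.mem_univ j⟩
  have hmaxj : ∀ i, |x i| ≤ |x j| := by
    intro i
    have hij : |x i| ≤ |x i0| := hi0 i (Finset.mem_univ i)
    rcases le_or_gt (|x i0|) (|x j|) with h | h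
    · exact hij.trans h
    exfalso
    have hne : i0 ≠ j := by rintro rfl; exact lt_irrefl _ h
    have hM : 0 < |x i0| := lt_of_le_of_lt (abs_nonneg _) h
    have heq : ∑ k, A i0 k * x k = 0 := by rw [hrow]; simp [hne]
    have hsum := Finset.sum_erase_add Finset.univ (fun k => A i0 k * x k)
      (Finset.mem_univ i0)
    have hsum := hsum
    have hsplit : A i0 i0 * x i0 = -∑ k ∈ Finset.univ.erase i0, A i0 k * x k := by
      rw [heq] at hsum; linarith
    have hb : A i0 i0 * |x i0| ≤ (∑ k ∈ Finset.univ.erase i0, A i0 k) * |x i0| := by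
      calc A i0 i0 * |x i0| = |A i0 i0 * x i0| := by
            rw [abs_mul, abs_of_pos (hpos i0 i0)]
        _ = |∑ k ∈ Finset.univ.erase i0, A i0 k * x k| := by rw [hsplit, abs_neg]
        _ ≤ ∑ k ∈ Finset.univ.erase i0, |A i0 k * x k| :=
            Finset.abs_sum_le_sum_abs _ _
        _ ≤ ∑ k ∈ Finset.univ.erase i0, A i0 k * |x i0| := by
            apply Finset.sum_le_sum
            intro k _
            rw [abs_mul, abs_of_pos (hpos i0 k)]
            exact mul_le_mul_of_nonneg_left (hi0 k (Finset.mem_univ k)) (hpos i0 k).le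
        _ = (∑ k ∈ Finset.univ.erase i0, A i0 k) * |x i0| :=
            (Finset.sum_mul _ _ _).symm
    have hc := mul_lt_mul_of_pos_right (hdom i0) hM
    linarith
  have heq1 : ∑ k, A j k * x k = 1 := by rw [hrow]; simp
  have hxjpos : 0 < x j := by
    by_contra hle
    push_neg at hle
    rcases eq_or_lt_of_le hle with h0 | hneg
    · have hzero : ∀ k, x k = 0 := by
        intro k
        have hk := hmaxj k
        rw [h0, abs_zero] at hk
        exact abs_eq_zero.mp (le_antisymm hk (abs_nonneg _))
      rw [Finset.sum_congr rfl (fun k _ => by rw [hzero k, mul_zero])] at heq1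
      simp at heq1
    · have hsum : ∑ k ∈ Finset.univ.erase j, A j k * x k + A j j * x j = 1 := by
        rw [← heq1]; exact Finset.sum_erase_add _ _ (Finset.mem_univ j)
      have habs : |x j| = -x j := abs_of_neg hneg
      have hb : ∑ k ∈ Finset.univ.erase j, A j k * x k
          ≤ (∑ k ∈ Finset.univ.erase j, A j k) * |x j| := by
        rw [Finset.sum_mul]
        apply Finset.sum_le_sum
        intro k _
        calc A j k * x k ≤ |A j k * x k| := le_abs_self _
          _ = A j k * |x k| := by rw [abs_mul, abs_of_pos (hpos j k)]
          _ ≤ A j k * |x j| := mul_le_mul_of_nonneg_left (hmaxj k) (hpos j k).le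
      have hM : 0 < |x j| := abs_pos.mpr hneg.ne
      have hc := mul_lt_mul_of_pos_right (hdom j) hM
      rw [habs] at hb hc
      linarith
  refine ⟨hxjpos, fun i => ?_⟩
  have := hmaxj i
  rwa [abs_of_pos hxjpos] at this
end

section
/- Let n ≥ 2 and let A be an n×n row-stochastic strictly diagonally dominant positive real matrix. Then for every j and every k ≠ j, if A^{-1}_{kj} is a second-largest-in-absolute-value entry of column j of A^{-1} (i.e., |A^{-1}_{kj}| ≥ |A^{-1}_{ij}| for all i ≠ j), then A^{-1}_{kj} < 0. -/
open Matrix Finset Real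

theorem second_largest_abs_entry_neg {n : ℕ} (hn : 2 ≤ n) (A : Matrix (Fin n) (Fin n) ℝ)
    (hst : RowStochastic A) (hA : SDDPos A) :
    ∀ j k, k ≠ j → (∀ i, i ≠ j → |A⁻¹ i j| ≤ |A⁻¹ k j|) → A⁻¹ k j < 0 := by
  obtain ⟨hpos, hdom⟩ := hA
  have hdet : A.det ≠ 0 := by
    apply det_ne_zero_of_sum_row_lt_diag
    intro i
    simpa [Real.norm_eq_abs, abs_of_pos (hpos _ _)] using hdom i
  have hAB : A * A⁻¹ = 1 := Matrix.mul_nonsing_inv A (isUnit_iff_ne_zero.mpr hdet)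
  intro j k hkj hmax
  set b : Fin n → ℝ := fun i => A⁻¹ i j with hbdef
  have heq : ∀ i, ∑ m, A i m * b m = if i = j then 1 else 0 := by
    intro i
    have h := congrFun (congrFun hAB i) j
    simpa [Matrix.mul_apply, Matrix.one_apply, hbdef] using h
  -- Step 1: the max abs entry of column j is at the diagonal position j
  have key : ∀ m, |b m| ≤ |b j| := by
    haveI : Nonempty (Fin n) := ⟨⟨0, by omega⟩⟩
    obtain ⟨m0, hm0⟩ := Finite.exists_max (fun m => |b m|)
    by_cases hm0j : m0 = j
    · intro m; rw [← hm0j]; exact hm0 m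
    · exfalso
      have h0 : A m0 m0 * b m0 + ∑ m ∈ Finset.univ.erase m0, A m0 m * b m = 0 := by
        have := heq m0
        rw [← Finset.add_sum_erase Finset.univ (fun m => A m0 m * b m) (Finset.mem_univ m0)] at this
        simpa [hm0j] using this
      have hbound : A m0 m0 * |b m0| ≤ (∑ m ∈ Finset.univ.erase m0, A m0 m) * |b m0| := by
        have h1 : A m0 m0 * |b m0| = |A m0 m0 * b m0| := by
          rw [abs_mul, abs_of_pos (hpos m0 m0)]
        have h2 : |A m0 m0 * b m0| = |∑ m ∈ Finset.univ.erase m0, A m0 m * b m| := by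
          rw [show A m0 m0 * b m0 = -(∑ m ∈ Finset.univ.erase m0, A m0 m * b m) by linarith]
          rw [abs_neg]
        rw [h1, h2, Finset.sum_mul]
        refine (Finset.abs_sum_le_sum_abs _ _).trans (Finset.sum_le_sum fun m _ => ?_)
        rw [abs_mul, abs_of_pos (hpos m0 m)]
        exact mul_le_mul_of_nonneg_left (hm0 m) (hpos m0 m).le
      have hb0 : b m0 = 0 := by
        by_contra hne
        have : 0 < |b m0| := abs_pos.mpr hne
        nlinarith [hdom m0]
      have hball : ∀ m, b m = 0 := fun m => abs_nonpos_iff.mp (by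
        calc |b m| ≤ |b m0| := hm0 m
        _ = 0 := by rw [hb0, abs_zero])
      have := heq j
      simp [hball] at this
  -- Step 2: b j > 0
  have hbj : 0 < b j := by
    by_contra hle
    push_neg at hle
    have habs : |b j| = -b j := abs_of_nonpos hle
    have h0 : A j j * b j + ∑ m ∈ Finset.univ.erase j, A j m * b m = 1 := by
      have := heq j
      rw [← Finset.add_sum_erase Finset.univ (fun m => A j m * b m) (Finset.mem_univ j)] at this
      simpa using this
    have hS : ∑ m ∈ Finset.univ.erase j, A j m * b m
        ≤ (∑ m ∈ Finset.univ.erase j, A j m) * (-b j) := by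
      rw [Finset.sum_mul]
      refine Finset.sum_le_sum fun m _ => ?_
      have : b m ≤ -b j := (le_abs_self _).trans ((key m).trans_eq habs)
      exact mul_le_mul_of_nonneg_left this (hpos j m).le
    have hS2 : (∑ m ∈ Finset.univ.erase j, A j m) * (-b j) ≤ A j j * (-b j) :=
      mul_le_mul_of_nonneg_right (hdom j).le (by linarith)
    linarith
  -- Step 3: conclude
  by_contra hk
  push_neg at hk
  have hbk : |A⁻¹ k j| = b k := abs_of_nonneg hk
  have h0 : A k j * b j + (A k k * b k + ∑ m ∈ (Finset.univ.erase j).erase k,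
      A k m * b m) = 0 := by
    have h1 := heq k
    rw [← Finset.add_sum_erase Finset.univ (fun m => A k m * b m) (Finset.mem_univ j)] at h1
    rw [← Finset.add_sum_erase _ (fun m => A k m * b m)
      (Finset.mem_erase.mpr ⟨hkj, Finset.mem_univ k⟩)] at h1
    simpa [hkj] using h1
  have hrest : -((∑ m ∈ (Finset.univ.erase j).erase k, A k m) * b k)
      ≤ ∑ m ∈ (Finset.univ.erase j).erase k, A k m * b m := by
    rw [Finset.sum_mul, ← Finset.sum_neg_distrib]
    refine Finset.sum_le_sum fun m hm => ?_
    have hmj : m ≠ j := (Finset.mem_erase.mp (Finset.mem_of_mem_erase hm)).1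
    have : -b k ≤ b m := by
      have := (hmax m hmj).trans_eq hbk
      have := neg_abs_le (b m)
      linarith
    nlinarith [hpos k m]
  have hsub : ∑ m ∈ (Finset.univ.erase j).erase k, A k m
      ≤ ∑ m ∈ Finset.univ.erase k, A k m := by
    refine Finset.sum_le_sum_of_subset_of_nonneg ?_ (fun m _ _ => (hpos k m).le)
    intro m hm
    exact Finset.mem_erase.mpr ⟨(Finset.mem_erase.mp hm).1,
      Finset.mem_univ m⟩
  have hAkj : 0 < A k j * b j := mul_pos (hpos k j) hbj
  nlinarith [hdom k, hsub, hrest]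
end

section
/- Let n ≥ 2 and let A be an n×n row-stochastic strictly diagonally dominant positive real matrix. Then for every j and every k ≠ j, |A^{-1}_{kj}| · (c_min(A) − 1) ≤ A^{-1}_{jj}. -/
open Matrix Finset Real

theorem offdiag_abs_le_diag_inv {n : ℕ} (hn : 2 ≤ n) (A : Matrix (Fin n) (Fin n) ℝ)
    (hst : RowStochastic A) (hA : SDDPos A) :
    ∀ j k, k ≠ j → |A⁻¹ k j| * (cmin A - 1) ≤ A⁻¹ j j := by

  obtain ⟨hpos, hsdd⟩ := hA
  have hnone : Nonempty (Fin n) := ⟨⟨0, by omega⟩⟩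
  set R : Fin n → ℝ := fun i => ∑ l ∈ Finset.univ.erase i, A i l with hRdef
  have hRpos : ∀ i, 0 < R i := by
    intro i
    apply Finset.sum_pos (fun l _ => hpos i l)
    rw [← Finset.card_pos, Finset.card_erase_of_mem (Finset.mem_univ i),
      Finset.card_univ, Fintype.card_fin]
    omega
  have hdet : IsUnit A.det := by
    apply isUnit_iff_ne_zero.mpr
    apply det_ne_zero_of_sum_row_lt_diag
    intro i
    calc ∑ l ∈ Finset.univ.erase i, ‖A i l‖ = R i := by
          apply Finset.sum_congr rfl
          intro l _
          exact Real.norm_of_nonneg (hpos i l).le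
      _ < A i i := hsdd i
      _ ≤ ‖A i i‖ := le_abs_self _
  intro j k hkj
  set x : Fin n → ℝ := fun l => A⁻¹ l j with hxdef
  have hAB : ∀ i, ∑ l, A i l * x l = if i = j then 1 else 0 := by
    intro i
    have h1 := Matrix.mul_nonsing_inv A hdet
    have h2 : (A * A⁻¹) i j = (1 : Matrix (Fin n) (Fin n) ℝ) i j := by rw [h1]
    rw [Matrix.mul_apply] at h2
    simpa [Matrix.one_apply] using h2
  have hsplit : ∀ i, A i i * x i
      = (if i = j then 1 else 0) - ∑ l ∈ Finset.univ.erase i, A i l * x l := by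
    intro i
    have h1 := Finset.sum_erase_add Finset.univ (fun l => A i l * x l) (Finset.mem_univ i)
    have h2 := hAB i
    linarith [h1, h2]
  -- Claim A: max of |x| is attained at j
  have hmaxj : ∀ i, |x i| ≤ |x j| := by
    obtain ⟨i0, -, hi0⟩ := Finset.exists_max_image Finset.univ (fun i => |x i|)
      ⟨j, Finset.mem_univ j⟩
    by_cases h : i0 = j
    · intro i
      have := hi0 i (Finset.mem_univ i)
      simpa [h] using this
    · exfalso
      have hs := hsplit i0
      rw [if_neg h] at hs
      have habs : A i0 i0 * |x i0| ≤ R i0 * |x i0| := by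
        calc A i0 i0 * |x i0| = |A i0 i0 * x i0| := by
              rw [abs_mul, abs_of_pos (hpos i0 i0)]
          _ = |∑ l ∈ Finset.univ.erase i0, A i0 l * x l| := by
              rw [hs]; rw [zero_sub, abs_neg]
          _ ≤ ∑ l ∈ Finset.univ.erase i0, |A i0 l * x l| :=
              Finset.abs_sum_le_sum_abs _ _
          _ ≤ ∑ l ∈ Finset.univ.erase i0, A i0 l * |x i0| := by
              apply Finset.sum_le_sum
              intro l _
              rw [abs_mul, abs_of_pos (hpos i0 l)]
              exact mul_le_mul_of_nonneg_left (hi0 l (Finset.mem_univ l)) (hpos i0 l).le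
          _ = R i0 * |x i0| := by rw [← Finset.sum_mul]
      have hx0 : |x i0| = 0 := by nlinarith [hsdd i0, abs_nonneg (x i0)]
      have hallzero : ∀ l, x l = 0 := by
        intro l
        have h1 := hi0 l (Finset.mem_univ l)
        rw [hx0] at h1
        exact abs_eq_zero.mp (le_antisymm h1 (abs_nonneg _))
      have h2 := hAB j
      rw [if_pos rfl] at h2
      simp [hallzero] at h2
  -- Claim B: x j ≥ 0
  have hxj : 0 ≤ x j := by
    by_contra hneg
    push_neg at hneg
    have hs := hsplit j
    rw [if_pos rfl] at hs
    have hbound : ∑ l ∈ Finset.univ.erase j, A j l * x l ≤ R j * |x j| := by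
      calc ∑ l ∈ Finset.univ.erase j, A j l * x l
          ≤ ∑ l ∈ Finset.univ.erase j, A j l * |x j| := by
            apply Finset.sum_le_sum
            intro l _
            exact mul_le_mul_of_nonneg_left ((le_abs_self _).trans (hmaxj l)) (hpos j l).le
        _ = R j * |x j| := by rw [← Finset.sum_mul]
    rw [abs_of_neg hneg] at hbound
    nlinarith [hsdd j, hRpos j]
  -- Claim C: max over i ≠ j
  obtain ⟨k0, hk0mem, hk0max⟩ := Finset.exists_max_image (Finset.univ.erase j)
    (fun i => |x i|) ⟨k, Finset.mem_erase.mpr ⟨hkj, Finset.mem_univ k⟩⟩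
  have hk0j : k0 ≠ j := (Finset.mem_erase.mp hk0mem).1
  set M := |x k0| with hMdef
  have hMnn : 0 ≤ M := abs_nonneg _
  have hjmem : j ∈ Finset.univ.erase k0 :=
    Finset.mem_erase.mpr ⟨Ne.symm hk0j, Finset.mem_univ j⟩
  have hs := hsplit k0
  rw [if_neg hk0j] at hs
  have hsum2 : ∑ l ∈ Finset.univ.erase k0, A k0 l * x l
      = A k0 j * x j + ∑ l ∈ (Finset.univ.erase k0).erase j, A k0 l * x l :=
    (Finset.add_sum_erase _ _ hjmem).symm
  have hRsum2 : ∑ l ∈ (Finset.univ.erase k0).erase j, A k0 l = R k0 - A k0 j := by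
    have := Finset.add_sum_erase (Finset.univ.erase k0) (fun l => A k0 l) hjmem
    linarith
  have hM2 : A k0 k0 * M ≤ A k0 j * x j + (R k0 - A k0 j) * M := by
    calc A k0 k0 * M = |A k0 k0 * x k0| := by rw [abs_mul, abs_of_pos (hpos k0 k0)]
      _ = |∑ l ∈ Finset.univ.erase k0, A k0 l * x l| := by rw [hs]; rw [zero_sub, abs_neg]
      _ = |A k0 j * x j + ∑ l ∈ (Finset.univ.erase k0).erase j, A k0 l * x l| := by
          rw [hsum2]
      _ ≤ |A k0 j * x j| + |∑ l ∈ (Finset.univ.erase k0).erase j, A k0 l * x l| :=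
          abs_add_le _ _
      _ ≤ A k0 j * x j + ∑ l ∈ (Finset.univ.erase k0).erase j, |A k0 l * x l| := by
          gcongr
          · rw [abs_mul, abs_of_pos (hpos k0 j), abs_of_nonneg hxj]
          · exact Finset.abs_sum_le_sum_abs _ _
      _ ≤ A k0 j * x j + ∑ l ∈ (Finset.univ.erase k0).erase j, A k0 l * M := by
          gcongr with l hl
          rw [abs_mul, abs_of_pos (hpos k0 l)]
          have hlj : l ∈ Finset.univ.erase j := by
            have := Finset.mem_erase.mp hl
            exact Finset.mem_erase.mpr ⟨this.1, Finset.mem_univ l⟩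
          exact mul_le_mul_of_nonneg_left (hk0max l hlj) (hpos k0 l).le
      _ = A k0 j * x j + (R k0 - A k0 j) * M := by rw [← Finset.sum_mul, hRsum2]
  have hAk0j_le : A k0 j ≤ R k0 := by
    apply Finset.single_le_sum (fun l _ => (hpos k0 l).le) hjmem
  have hkey : M * (A k0 k0 - R k0) ≤ R k0 * x j := by
    nlinarith [hpos k0 j, mul_le_mul_of_nonneg_right hAk0j_le hxj]
  -- cmin facts
  have hcmin_eq : cmin A = ⨅ i, A i i / R i := by
    unfold cmin
    apply iInf_congr
    intro i
    congr 1
    apply Finset.sum_congr rfl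
    intro l _
    exact abs_of_pos (hpos i l)
  have hone : 1 ≤ cmin A := by
    rw [hcmin_eq]
    apply le_ciInf
    intro i
    rw [le_div_iff₀ (hRpos i)]
    linarith [hsdd i]
  have hle : cmin A ≤ A k0 k0 / R k0 := by
    rw [hcmin_eq]
    exact ciInf_le (Set.Finite.bddBelow (Set.finite_range _)) k0
  have hd : A k0 k0 = (A k0 k0 / R k0) * R k0 := (div_mul_cancel₀ _ (hRpos k0).ne').symm
  have h1 : M * (A k0 k0 / R k0 - 1) ≤ x j := by
    have h2 : R k0 * (M * (A k0 k0 / R k0 - 1)) ≤ R k0 * x j := by nlinarith [hkey]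
    exact le_of_mul_le_mul_left h2 (hRpos k0)
  have hxkM : |x k| ≤ M := hk0max k (Finset.mem_erase.mpr ⟨hkj, Finset.mem_univ k⟩)
  calc |A⁻¹ k j| * (cmin A - 1) = |x k| * (cmin A - 1) := rfl
    _ ≤ M * (cmin A - 1) := by
        apply mul_le_mul_of_nonneg_right hxkM
        linarith
    _ ≤ M * (A k0 k0 / R k0 - 1) := by
        apply mul_le_mul_of_nonneg_left _ hMnn
        linarith
    _ ≤ x j := h1
end

section
/- Let n ≥ 2 and let A be an n×n row-stochastic strictly diagonally dominant positive real matrix. Then for every i, c_i(A^{-T}) ≥ (c_min(A) − 1)/(n − 1), i.e., A^{-1}_{ii} / Σ_{j≠i} |A^{-1}_{ji}| ≥ (c_min(A) − 1)/(n − 1). -/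
open Matrix Finset Real

theorem gershgorin_ratio_inv_transpose_lower_bound {n : ℕ} (hn : 2 ≤ n)
    (A : Matrix (Fin n) (Fin n) ℝ) (hst : RowStochastic A) (hA : SDDPos A) :
    ∀ i, (cmin A - 1) / ((n : ℝ) - 1) ≤
      A⁻¹ i i / ∑ j ∈ Finset.univ.erase i, |A⁻¹ j i| := by
  intro i
  have hn' : (2 : ℝ) ≤ (n : ℝ) := by exact_mod_cast hn
  have hnpos : (0 : ℝ) < (n : ℝ) - 1 := by linarith
  have hdet : A.det ≠ 0 := by
    apply det_ne_zero_of_sum_row_lt_diag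
    intro k
    have h1 : ∑ j ∈ Finset.univ.erase k, ‖A k j‖ = ∑ j ∈ Finset.univ.erase k, A k j :=
      Finset.sum_congr rfl fun j _ => by
        rw [Real.norm_eq_abs, abs_of_pos (hA.1 k j)]
    rw [h1, Real.norm_eq_abs, abs_of_pos (hA.1 k k)]
    exact hA.2 k
  set x : Fin n → ℝ := fun j => A⁻¹ j i with hx
  have hmul : ∀ j, ∑ l, A j l * x l = if j = i then 1 else 0 := by
    intro j
    have h2 := congrFun (congrFun (Matrix.mul_nonsing_inv A (isUnit_iff_ne_zero.mpr hdet)) j) i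
    simpa [Matrix.mul_apply, Matrix.one_apply] using h2
  -- row bound for j ≠ i
  have hrow : ∀ j, j ≠ i → A j j * |x j| ≤ ∑ l ∈ Finset.univ.erase j, A j l * |x l| := by
    intro j hj
    have h0 : ∑ l, A j l * x l = 0 := by rw [hmul j, if_neg hj]
    have hsplit : A j j * x j + ∑ l ∈ Finset.univ.erase j, A j l * x l
        = ∑ l, A j l * x l :=
      Finset.add_sum_erase Finset.univ (fun l => A j l * x l) (Finset.mem_univ j)
    have h1 : A j j * x j = -∑ l ∈ Finset.univ.erase j, A j l * x l := by
      linarith [hsplit, h0]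
    calc A j j * |x j| = |A j j * x j| := by
          rw [abs_mul, abs_of_pos (hA.1 j j)]
      _ = |∑ l ∈ Finset.univ.erase j, A j l * x l| := by rw [h1, abs_neg]
      _ ≤ ∑ l ∈ Finset.univ.erase j, |A j l * x l| := Finset.abs_sum_le_sum_abs _ _
      _ = ∑ l ∈ Finset.univ.erase j, A j l * |x l| :=
          Finset.sum_congr rfl fun l _ => by rw [abs_mul, abs_of_pos (hA.1 j l)]
  -- |x j| ≤ |x i| for all j
  have hle : ∀ j, |x j| ≤ |x i| := by
    obtain ⟨j0, -, hj0⟩ :=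
      Finset.exists_max_image Finset.univ (fun j => |x j|) ⟨i, Finset.mem_univ i⟩
    intro j
    by_contra hcon
    push_neg at hcon
    have hj0i : |x i| < |x j0| := lt_of_lt_of_le hcon (hj0 j (Finset.mem_univ j))
    have hj0ne : j0 ≠ i := by rintro rfl; exact lt_irrefl _ hj0i
    have hj0pos : 0 < |x j0| := lt_of_le_of_lt (abs_nonneg _) hj0i
    have h1 := hrow j0 hj0ne
    have h2 : ∑ l ∈ Finset.univ.erase j0, A j0 l * |x l| ≤
        (∑ l ∈ Finset.univ.erase j0, A j0 l) * |x j0| := by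
      rw [Finset.sum_mul]
      exact Finset.sum_le_sum fun l _ =>
        mul_le_mul_of_nonneg_left (hj0 l (Finset.mem_univ l)) (le_of_lt (hA.1 j0 l))
    have h3 : (∑ l ∈ Finset.univ.erase j0, A j0 l) * |x j0| < A j0 j0 * |x j0| :=
      mul_lt_mul_of_pos_right (hA.2 j0) hj0pos
    linarith
  -- x i > 0
  have hxi : 0 < x i := by
    by_contra hcon
    push_neg at hcon
    have h0 : ∑ l, A i l * x l = 1 := by rw [hmul i, if_pos rfl]
    have h1 : ∀ l, x l ≤ -x i := fun l =>
      le_trans (le_abs_self _) (le_trans (hle l) (le_of_eq (abs_of_nonpos hcon)))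
    have hsplit : A i i * x i + ∑ l ∈ Finset.univ.erase i, A i l * x l
        = ∑ l, A i l * x l :=
      Finset.add_sum_erase Finset.univ (fun l => A i l * x l) (Finset.mem_univ i)
    have h2 : ∑ l ∈ Finset.univ.erase i, A i l * x l ≤
        (∑ l ∈ Finset.univ.erase i, A i l) * (-x i) := by
      rw [Finset.sum_mul]
      exact Finset.sum_le_sum fun l _ =>
        mul_le_mul_of_nonneg_left (h1 l) (le_of_lt (hA.1 i l))
    have h3 : (∑ l ∈ Finset.univ.erase i, A i l) * (-x i) ≤ A i i * (-x i) :=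
      mul_le_mul_of_nonneg_right (le_of_lt (hA.2 i)) (by linarith)
    nlinarith [hsplit, h0, h2, h3]
  have hxii : |x i| = x i := abs_of_pos hxi
  -- R_j > 0
  have hR : ∀ j : Fin n, 0 < ∑ l ∈ Finset.univ.erase j, A j l := by
    intro j
    obtain ⟨l, hl⟩ := Fintype.exists_ne_of_one_lt_card (by simp only [Fintype.card_fin]; omega) j
    exact Finset.sum_pos' (fun l _ => le_of_lt (hA.1 j l))
      ⟨l, Finset.mem_erase.2 ⟨hl, Finset.mem_univ l⟩, hA.1 j l⟩
  -- cmin A ≤ c_j and key per-j bound : cmin A * |x j| ≤ x i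
  have hkey : ∀ j, j ≠ i → cmin A * |x j| ≤ x i := by
    intro j hj
    have hRj := hR j
    have hceq : ∑ l ∈ Finset.univ.erase j, |A j l| = ∑ l ∈ Finset.univ.erase j, A j l :=
      Finset.sum_congr rfl fun l _ => abs_of_pos (hA.1 j l)
    have hcle : cmin A ≤ A j j / ∑ l ∈ Finset.univ.erase j, A j l := by
      have := ciInf_le (Set.Finite.bddBelow (Set.finite_range
        (fun k => A k k / ∑ l ∈ Finset.univ.erase k, |A k l|))) j
      rw [cmin]
      rwa [hceq] at this
    have h1 : A j j * |x j| ≤ (∑ l ∈ Finset.univ.erase j, A j l) * x i := by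
      refine le_trans (hrow j hj) ?_
      rw [Finset.sum_mul]
      exact Finset.sum_le_sum fun l _ =>
        mul_le_mul_of_nonneg_left (hxii ▸ hle l) (le_of_lt (hA.1 j l))
    calc cmin A * |x j| ≤ (A j j / ∑ l ∈ Finset.univ.erase j, A j l) * |x j| :=
          mul_le_mul_of_nonneg_right hcle (abs_nonneg _)
      _ = (A j j * |x j|) / ∑ l ∈ Finset.univ.erase j, A j l := by ring
      _ ≤ x i := by rw [div_le_iff₀ hRj]; linarith [h1]
  set S : ℝ := ∑ j ∈ Finset.univ.erase i, |x j| with hS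
  have hSsum : cmin A * S ≤ ((n : ℝ) - 1) * x i := by
    have h1 : ∀ j ∈ Finset.univ.erase i, cmin A * |x j| ≤ x i := fun j hj =>
      hkey j (Finset.mem_erase.1 hj).1
    have h2 : ∑ j ∈ Finset.univ.erase i, cmin A * |x j| ≤
        ∑ j ∈ Finset.univ.erase i, x i := Finset.sum_le_sum h1
    rw [Finset.sum_const, ← Finset.mul_sum] at h2
    have hcard : (Finset.univ.erase i).card = n - 1 := by
      rw [Finset.card_erase_of_mem (Finset.mem_univ i), Finset.card_univ, Fintype.card_fin]
    rw [hcard] at h2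
    have : ((n - 1 : ℕ) : ℝ) = (n : ℝ) - 1 := by
      have : 1 ≤ n := le_trans one_le_two hn
      push_cast [this]; ring
    rw [nsmul_eq_mul, this] at h2
    exact h2
  have hSpos : 0 < S := by
    rcases lt_or_eq_of_le (Finset.sum_nonneg fun j _ => abs_nonneg (x j)) with h | h
    · exact h
    · exfalso
      have hzero : ∀ j ∈ Finset.univ.erase i, |x j| = 0 := by
        intro j hj
        have := (Finset.sum_eq_zero_iff_of_nonneg fun l _ => abs_nonneg (x l)).1 h.symm j hj
        exact this
      obtain ⟨j, hj⟩ := Fintype.exists_ne_of_one_lt_card (by simp only [Fintype.card_fin]; omega) i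
      have h0 : ∑ l, A j l * x l = 0 := by rw [hmul j, if_neg hj]
      have h1 : ∑ l, A j l * x l = A j i * x i := by
        refine Finset.sum_eq_single i (fun l _ hl => ?_) (fun h => absurd (Finset.mem_univ i) h)
        have : |x l| = 0 := hzero l (Finset.mem_erase.2 ⟨hl, Finset.mem_univ l⟩)
        rw [abs_eq_zero.1 this, mul_zero]
      rw [h1] at h0
      exact absurd h0 (ne_of_gt (mul_pos (hA.1 j i) hxi))
  rw [div_le_div_iff₀ hnpos hSpos]
  nlinarith [hSsum, hSpos]
end

section
/- Let A be an n×n invertible row-stochastic real matrix with all entries strictly positive. Then the channel capacity satisfies C(A) ≤ U(A), i.e., for every probability mass vector p, I_A(p) ≤ −Σ_j q*_j log₂ q*_j + Σ_{i,j} p*_i A_{ij} log₂ A_{ij}, where q*_j = 2^{−K_j}/Σ_i 2^{−K_i} and p* = A^{−T} q*. -/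
open Matrix Finset Real

/-! ### Auxiliary lemmas -/

lemma inner_sum_eq {n : ℕ} (A : Matrix (Fin n) (Fin n) ℝ) (p : Fin n → ℝ) :
    ∑ i, ∑ j, p i * A i j * Real.logb 2 (A i j) = -∑ i, p i * rowEntropy A i := by
  have h : ∀ i : Fin n, ∑ j, p i * A i j * Real.logb 2 (A i j) = -(p i * rowEntropy A i) := by
    intro i
    simp [rowEntropy, Finset.mul_sum, mul_assoc]
  simp [h]

lemma sum_q_Kvec {n : ℕ} (A : Matrix (Fin n) (Fin n) ℝ) (hinv : IsUnit A.det)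
    (p : Fin n → ℝ) :
    ∑ j, Aᵀ.mulVec p j * Kvec A j = ∑ i, p i * rowEntropy A i := by
  have key : ∀ i : Fin n, ∑ j, Aᵀ.mulVec p j * A⁻¹ j i = p i := by
    intro i
    have h1 : ∑ j, Aᵀ.mulVec p j * A⁻¹ j i
        = ∑ k, p k * ∑ j, A k j * A⁻¹ j i := by
      simp only [Matrix.mulVec, dotProduct, Matrix.transpose_apply, Finset.sum_mul,
        Finset.mul_sum]
      rw [Finset.sum_comm]
      refine Finset.sum_congr rfl fun k _ => Finset.sum_congr rfl fun j _ => by ring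
    have h2 : ∀ k, ∑ j, A k j * A⁻¹ j i = (1 : Matrix (Fin n) (Fin n) ℝ) k i := by
      intro k; rw [← Matrix.mul_apply, Matrix.mul_nonsing_inv A hinv]
    rw [h1]
    simp only [h2, Matrix.one_apply]
    simp
  calc ∑ j, Aᵀ.mulVec p j * Kvec A j
      = ∑ i, (∑ j, Aᵀ.mulVec p j * A⁻¹ j i) * rowEntropy A i := by
        simp only [Kvec, Finset.mul_sum, Finset.sum_mul]
        rw [Finset.sum_comm]
        refine Finset.sum_congr rfl fun i _ => Finset.sum_congr rfl fun j _ => by ring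
    _ = ∑ i, p i * rowEntropy A i := by
        refine Finset.sum_congr rfl fun i _ => by rw [key i]

lemma sum_pStar_H {n : ℕ} (A : Matrix (Fin n) (Fin n) ℝ) :
    ∑ i, pStar A i * rowEntropy A i = ∑ j, qStar A j * Kvec A j := by
  simp only [pStar, Matrix.mulVec, dotProduct, Matrix.transpose_apply, Kvec,
    Finset.sum_mul, Finset.mul_sum]
  rw [Finset.sum_comm]
  refine Finset.sum_congr rfl fun j _ => Finset.sum_congr rfl fun i _ => by ring

lemma gibbs {n : ℕ} (q a : Fin n → ℝ) (hq : ∀ j, 0 < q j) (hq1 : ∑ j, q j = 1)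
    (ha : ∀ j, 0 < a j) :
    ∑ j, q j * Real.logb 2 (a j / q j) ≤ Real.logb 2 (∑ j, a j) := by
  have hne : (Finset.univ : Finset (Fin n)).Nonempty := by
    by_contra h
    rw [Finset.not_nonempty_iff_eq_empty] at h
    rw [h, Finset.sum_empty] at hq1
    norm_num at hq1
  set S := ∑ j, a j with hSdef
  have hS : 0 < S := Finset.sum_pos (fun j _ => ha j) hne
  have hlog2 : (0 : ℝ) < Real.log 2 := Real.log_pos one_lt_two
  have hdiv : ∑ j, q j * Real.logb 2 (a j / q j)
      = (∑ j, q j * Real.log (a j / q j)) / Real.log 2 := by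
    rw [Finset.sum_div]
    refine Finset.sum_congr rfl fun j _ => ?_
    rw [Real.logb]; ring
  rw [hdiv, Real.logb, div_le_div_iff_of_pos_right hlog2]
  have key : ∀ j : Fin n, q j * Real.log (a j / q j) ≤ a j / S - q j + q j * Real.log S := by
    intro j
    have hpos0 : (0 : ℝ) < a j / (q j * S) := div_pos (ha j) (mul_pos (hq j) hS)
    have h1 : Real.log (a j / (q j * S)) ≤ a j / (q j * S) - 1 :=
      Real.log_le_sub_one_of_pos hpos0
    have h2 : Real.log (a j / (q j * S)) = Real.log (a j / q j) - Real.log S := by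
      rw [show a j / (q j * S) = (a j / q j) / S by ring,
        Real.log_div (div_pos (ha j) (hq j)).ne' hS.ne']
    have h3 : q j * (a j / (q j * S)) = a j / S := by
      field_simp [(hq j).ne']
    have h4 := mul_le_mul_of_nonneg_left h1 (hq j).le
    rw [h2, mul_sub, mul_sub, h3, mul_one] at h4
    linarith
  calc ∑ j, q j * Real.log (a j / q j)
      ≤ ∑ j, (a j / S - q j + q j * Real.log S) := Finset.sum_le_sum fun j _ => key j
    _ = Real.log S := by
        rw [Finset.sum_add_distrib, Finset.sum_sub_distrib, ← Finset.sum_div,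
          ← Finset.sum_mul, hq1, ← hSdef, div_self hS.ne']
        ring

lemma Ubound_eq {n : ℕ} (A : Matrix (Fin n) (Fin n) ℝ) :
    Ubound A = Real.logb 2 (∑ j, (2 : ℝ) ^ (-Kvec A j)) := by
  rcases Nat.eq_zero_or_pos n with h0 | hn
  · subst h0
    simp [Ubound, Real.logb]
  · have : Nonempty (Fin n) := Fin.pos_iff_nonempty.mp hn
    set S := ∑ j, (2 : ℝ) ^ (-Kvec A j) with hSdef
    have hS : 0 < S :=
      Finset.sum_pos (fun j _ => Real.rpow_pos_of_pos two_pos _) Finset.univ_nonempty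
    have hq : ∀ j, Real.logb 2 (qStar A j) = -Kvec A j - Real.logb 2 S := by
      intro j
      rw [qStar, ← hSdef,
        Real.logb_div (Real.rpow_pos_of_pos two_pos _).ne' hS.ne',
        Real.logb_rpow two_pos (by norm_num)]
    have hsum1 : ∑ j, qStar A j = 1 := by
      simp only [qStar, ← hSdef]
      rw [← Finset.sum_div, ← hSdef, div_self hS.ne']
    rw [Ubound, inner_sum_eq, sum_pStar_H]
    have e : ∀ j : Fin n, qStar A j * Real.logb 2 (qStar A j) + qStar A j * Kvec A j
        = -(qStar A j * Real.logb 2 S) := by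
      intro j; rw [hq j]; ring
    have hsum : (∑ j, qStar A j * Real.logb 2 (qStar A j)) + ∑ j, qStar A j * Kvec A j
        = -(∑ j, qStar A j * Real.logb 2 S) := by
      rw [← Finset.sum_add_distrib, ← Finset.sum_neg_distrib]
      exact Finset.sum_congr rfl fun j _ => e j
    rw [← Finset.sum_mul, hsum1, one_mul] at hsum
    linarith

lemma mutualInfo_le_Ubound {n : ℕ} (A : Matrix (Fin n) (Fin n) ℝ)
    (hst : RowStochastic A) (hpos : ∀ i j, 0 < A i j) (hinv : IsUnit A.det)
    (p : Fin n → ℝ) (hp : IsPmf p) : mutualInfo A p ≤ Ubound A := by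
  obtain ⟨i0, hi0⟩ : ∃ i, 0 < p i := by
    by_contra h
    push_neg at h
    have : ∑ i, p i ≤ 0 := Finset.sum_nonpos fun i _ => h i
    rw [hp.2] at this; norm_num at this
  set q : Fin n → ℝ := fun j => Aᵀ.mulVec p j with hqdef
  have hqpos : ∀ j, 0 < q j := by
    intro j
    simp only [hqdef, Matrix.mulVec, dotProduct, Matrix.transpose_apply]
    exact Finset.sum_pos' (fun k _ => mul_nonneg (hpos k j).le (hp.1 k))
      ⟨i0, Finset.mem_univ i0, mul_pos (hpos i0 j) hi0⟩
  have hq1 : ∑ j, q j = 1 := by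
    simp only [hqdef, Matrix.mulVec, dotProduct, Matrix.transpose_apply]
    rw [Finset.sum_comm]
    calc ∑ k, ∑ j, A k j * p k = ∑ k, p k * ∑ j, A k j := by
          refine Finset.sum_congr rfl fun k _ => ?_
          rw [Finset.mul_sum]
          exact Finset.sum_congr rfl fun j _ => by ring
      _ = 1 := by
          simp only [hst.2, mul_one]
          exact hp.2
  set a : Fin n → ℝ := fun j => (2 : ℝ) ^ (-Kvec A j) with hadef
  have hapos : ∀ j, 0 < a j := fun j => Real.rpow_pos_of_pos two_pos _
  have hmi : mutualInfo A p = ∑ j, q j * Real.logb 2 (a j / q j) := by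
    have hlogb : ∀ j, Real.logb 2 (a j / q j) = -Kvec A j - Real.logb 2 (q j) := by
      intro j
      rw [Real.logb_div (hapos j).ne' (hqpos j).ne', hadef,
        Real.logb_rpow two_pos (by norm_num)]
    rw [mutualInfo, inner_sum_eq, ← sum_q_Kvec A hinv p]
    rw [show ∑ j, q j * Real.logb 2 (a j / q j)
        = ∑ j, (q j * (-Kvec A j) - q j * Real.logb 2 (q j)) from
      Finset.sum_congr rfl fun j _ => by rw [hlogb j]; ring]
    rw [Finset.sum_sub_distrib]
    have : ∑ j, q j * (-Kvec A j) = -∑ j, q j * Kvec A j := by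
      rw [← Finset.sum_neg_distrib]
      exact Finset.sum_congr rfl fun j _ => by ring
    rw [this]
    ring
  rw [hmi, Ubound_eq]
  exact gibbs q a hqpos hq1 hapos

theorem capacity_le_Ubound {n : ℕ} (A : Matrix (Fin n) (Fin n) ℝ)
    (hst : RowStochastic A) (hpos : ∀ i j, 0 < A i j) (hinv : IsUnit A.det) :
    capacity A ≤ Ubound A ∧
      ∀ p : Fin n → ℝ, IsPmf p → mutualInfo A p ≤ Ubound A := by
  refine ⟨?_, fun p hp => mutualInfo_le_Ubound A hst hpos hinv p hp⟩
  rcases Nat.eq_zero_or_pos n with h0 | hn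
  · subst h0
    have hempty : {x : ℝ | ∃ p : Fin 0 → ℝ, IsPmf p ∧ mutualInfo A p = x} = ∅ := by
      ext x
      simp only [Set.mem_setOf_eq, Set.mem_empty_iff_false, iff_false, not_exists]
      rintro p ⟨⟨hp0, hp1⟩, _⟩
      simp at hp1
    rw [capacity, hempty, Real.sSup_empty]
    simp [Ubound]
  · have hinst : Nonempty (Fin n) := Fin.pos_iff_nonempty.mp hn
    have hpmf : IsPmf (fun _ : Fin n => (n : ℝ)⁻¹) := by
      constructor
      · intro i; positivity
      · rw [Finset.sum_const, Finset.card_univ, Fintype.card_fin, nsmul_eq_mul]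
        field_simp
    refine csSup_le ⟨mutualInfo A (fun _ => (n : ℝ)⁻¹), ⟨_, hpmf, rfl⟩⟩ ?_
    rintro b ⟨p, hp, rfl⟩
    exact mutualInfo_le_Ubound A hst hpos hinv p hp
end

section
/- Let n ≥ 2 and let A be an n×n row-stochastic strictly diagonally dominant positive real matrix. If c_i(A^{-T}) ≥ (n−1)·2^{K_max − K_min} for every i, then the vector p* = A^{−T} q* has all entries nonnegative, where q*_j = 2^{−K_j}/Σ_i 2^{−K_i}. -/
open Matrix Finset Real

theorem pStar_nonneg_of_gershgorin_cond {n : ℕ} (hn : 2 ≤ n)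
    (A : Matrix (Fin n) (Fin n) ℝ) (hst : RowStochastic A) (hA : SDDPos A)
    (hc : ∀ i, ((n : ℝ) - 1) * (2 : ℝ) ^ (Kmax A - Kmin A) ≤
        A⁻¹ i i / ∑ j ∈ Finset.univ.erase i, |A⁻¹ j i|) :
    ∀ i, 0 ≤ pStar A i := by
  intro i
  haveI : NeZero n := ⟨by omega⟩
  set B := A⁻¹ with hB
  set S := ∑ k, (2 : ℝ) ^ (-Kvec A k) with hSdef
  have hS : 0 < S := by
    apply Finset.sum_pos (fun k _ => by positivity) Finset.univ_nonempty
  have hKlo : ∀ j, Kmin A ≤ Kvec A j := fun j =>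
    ciInf_le (Set.Finite.bddBelow (Set.finite_range _)) j
  have hKhi : ∀ j, Kvec A j ≤ Kmax A := fun j =>
    le_ciSup (Set.Finite.bddAbove (Set.finite_range _)) j
  set M : ℝ := (2 : ℝ) ^ (-Kmin A) / S with hM
  have hMpos : 0 < M := by positivity
  have hq_le : ∀ j, qStar A j ≤ M := by
    intro j
    apply (div_le_div_iff_of_pos_right hS).mpr
    exact Real.rpow_le_rpow_left_iff (by norm_num) |>.mpr (by linarith [hKlo j])
  have hq_ge : (2 : ℝ) ^ (-Kmax A) / S ≤ qStar A i := by
    apply (div_le_div_iff_of_pos_right hS).mpr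
    exact Real.rpow_le_rpow_left_iff (by norm_num) |>.mpr (by linarith [hKhi i])
  set Sig := ∑ j ∈ Finset.univ.erase i, |B j i| with hSigdef
  have hSignn : 0 ≤ Sig := Finset.sum_nonneg fun j _ => abs_nonneg _
  have hpow : (0 : ℝ) < (2 : ℝ) ^ (Kmax A - Kmin A) := by positivity
  have hn1 : (1 : ℝ) ≤ (n : ℝ) - 1 := by
    have : (2 : ℝ) ≤ (n : ℝ) := by exact_mod_cast hn
    linarith
  have hSigpos : 0 < Sig := by
    rcases hSignn.lt_or_eq with h | h
    · exact h
    · exfalso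
      have := hc i
      rw [← hSigdef, ← h, div_zero] at this
      nlinarith
  have hBii : ((n : ℝ) - 1) * (2 : ℝ) ^ (Kmax A - Kmin A) * Sig ≤ B i i :=
    (le_div_iff₀ hSigpos).mp (hc i)
  have hBii' : (2 : ℝ) ^ (Kmax A - Kmin A) * Sig ≤ B i i := by
    nlinarith [mul_pos hpow hSigpos]
  have hp : pStar A i = ∑ j, B j i * qStar A j := by
    simp [pStar, Matrix.mulVec, dotProduct, Matrix.transpose_apply, hB]
  rw [hp, ← Finset.add_sum_erase _ _ (Finset.mem_univ i)]
  have hq_pos : ∀ j, 0 < qStar A j := fun j => div_pos (by positivity) hS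
  have h2 : -(Sig * M) ≤ ∑ j ∈ Finset.univ.erase i, B j i * qStar A j := by
    calc -(Sig * M) = ∑ j ∈ Finset.univ.erase i, -(|B j i| * M) := by
          rw [hSigdef, Finset.sum_neg_distrib, Finset.sum_mul]
      _ ≤ _ := by
          apply Finset.sum_le_sum
          intro j _
          nlinarith [neg_abs_le (B j i), abs_nonneg (B j i), hq_le j, hq_pos j]
  have h1 : (2 : ℝ) ^ (-Kmax A) / S * ((2 : ℝ) ^ (Kmax A - Kmin A) * Sig) ≤
      B i i * qStar A i := by
    have hq_pos : 0 < qStar A i :=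
      lt_of_lt_of_le (by positivity) hq_ge
    have hBiipos : 0 < B i i := lt_of_lt_of_le (by positivity) hBii'
    calc (2 : ℝ) ^ (-Kmax A) / S * ((2 : ℝ) ^ (Kmax A - Kmin A) * Sig)
        ≤ qStar A i * ((2 : ℝ) ^ (Kmax A - Kmin A) * Sig) := by
          exact mul_le_mul_of_nonneg_right hq_ge (mul_pos hpow hSigpos).le
      _ ≤ qStar A i * B i i := mul_le_mul_of_nonneg_left hBii' hq_pos.le
      _ = B i i * qStar A i := mul_comm _ _
  have hkey : (2 : ℝ) ^ (-Kmax A) / S * ((2 : ℝ) ^ (Kmax A - Kmin A) * Sig) = Sig * M := by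
    have h2pow : (2 : ℝ) ^ (-Kmax A) * (2 : ℝ) ^ (Kmax A - Kmin A) = (2 : ℝ) ^ (-Kmin A) := by
      rw [← Real.rpow_add (by norm_num : (0:ℝ) < 2)]
      ring_nf
    rw [hM, div_mul_eq_mul_div, ← mul_assoc, h2pow]
    ring
  linarith [h1, h2]
end

section
/- Let n ≥ 2 and let A be an n×n row-stochastic strictly diagonally dominant positive real matrix. If c_i(A^{-T}) ≥ (n−1)·2^{K_max − K_min} for every i, then the channel capacity equals the closed-form expression: C(A) = U(A). -/
open Matrix Finset Real

-- Auxiliary lemmas ------------------------------------------------------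

lemma sum_mul_Kvec {n : ℕ} (A : Matrix (Fin n) (Fin n) ℝ) (r : Fin n → ℝ) :
    ∑ j, r j * Kvec A j = ∑ i, ((A⁻¹)ᵀ.mulVec r) i * rowEntropy A i := by
  simp only [Kvec, Finset.mul_sum, Matrix.mulVec, dotProduct, transpose_apply,
    Finset.sum_mul]
  rw [Finset.sum_comm]
  congr 1; ext i; congr 1; ext j; ring

theorem capacity_eq_Ubound_of_gershgorin_cond {n : ℕ} (hn : 2 ≤ n)
    (A : Matrix (Fin n) (Fin n) ℝ) (hst : RowStochastic A) (hA : SDDPos A)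
    (hc : ∀ i, ((n : ℝ) - 1) * (2 : ℝ) ^ (Kmax A - Kmin A) ≤
        A⁻¹ i i / ∑ j ∈ Finset.univ.erase i, |A⁻¹ j i|) :
    capacity A = Ubound A := by
  have hnpos : 0 < n := by omega
  haveI : Nonempty (Fin n) := ⟨⟨0, hnpos⟩⟩
  have hn1 : (1:ℝ) ≤ (n:ℝ) - 1 := by
    have : (2:ℝ) ≤ (n:ℝ) := by exact_mod_cast hn
    linarith
  -- invertibility
  have hdet : IsUnit A.det := by
    refine isUnit_iff_ne_zero.mpr (_root_.det_ne_zero_of_sum_row_lt_diag fun k => ?_)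
    have h2 : ∀ j, ‖A k j‖ = A k j := fun j => by
      rw [Real.norm_eq_abs, abs_of_pos (hA.1 k j)]
    calc ∑ j ∈ Finset.univ.erase k, ‖A k j‖ = ∑ j ∈ Finset.univ.erase k, A k j :=
          Finset.sum_congr rfl fun j _ => h2 j
      _ < A k k := hA.2 k
      _ = ‖A k k‖ := (h2 k).symm
  have hL : (0:ℝ) < Real.log 2 := Real.log_pos (by norm_num)
  set S : ℝ := ∑ i, (2:ℝ) ^ (-Kvec A i) with hSdef
  have hSpos : 0 < S := Finset.sum_pos (fun i _ => Real.rpow_pos_of_pos (by norm_num) _)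
    Finset.univ_nonempty
  have hqpos : ∀ j, 0 < qStar A j := fun j =>
    div_pos (Real.rpow_pos_of_pos (by norm_num) _) hSpos
  have hqsum : ∑ j, qStar A j = 1 := by
    simp only [qStar, ← hSdef]
    rw [← Finset.sum_div, div_self hSpos.ne']
  have hlogq : ∀ j, Real.logb 2 (qStar A j) = -Kvec A j - Real.logb 2 S := by
    intro j
    rw [qStar, ← hSdef, Real.logb_div (Real.rpow_pos_of_pos (by norm_num) _).ne' hSpos.ne',
      Real.logb_rpow (by norm_num) (by norm_num)]
  -- rewriting mutual information
  have hrec : ∀ p : Fin n → ℝ, (A⁻¹)ᵀ.mulVec (Aᵀ.mulVec p) = p := by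
    intro p
    rw [Matrix.mulVec_mulVec, ← Matrix.transpose_mul, Matrix.mul_nonsing_inv A hdet,
      Matrix.transpose_one, Matrix.one_mulVec]
  have hMI : ∀ p : Fin n → ℝ,
      mutualInfo A p = -(∑ j, Aᵀ.mulVec p j * Real.logb 2 (Aᵀ.mulVec p j))
        - ∑ j, Aᵀ.mulVec p j * Kvec A j := by
    intro p
    have h1 : ∑ j, Aᵀ.mulVec p j * Kvec A j = ∑ i, p i * rowEntropy A i := by
      rw [sum_mul_Kvec, hrec]
    have h2 : ∀ i, ∑ j, p i * A i j * Real.logb 2 (A i j) = -(p i * rowEntropy A i) := by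
      intro i
      simp [rowEntropy, Finset.mul_sum, mul_assoc]
    rw [mutualInfo, Finset.sum_congr rfl fun i _ => h2 i, Finset.sum_neg_distrib, h1]
    ring
  -- Gibbs' inequality
  have hGibbs : ∀ r : Fin n → ℝ, (∀ j, 0 ≤ r j) → ∑ j, r j = 1 →
      -(∑ j, r j * Real.logb 2 (r j)) - ∑ j, r j * Kvec A j ≤ Real.logb 2 S := by
    intro r hr hr1
    have key : ∀ j, -(r j * Real.logb 2 (r j)) - r j * Kvec A j
        ≤ r j * Real.logb 2 S + (qStar A j - r j) / Real.log 2 := by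
      intro j
      have hKeq : Kvec A j = -Real.logb 2 (qStar A j) - Real.logb 2 S := by
        rw [hlogq j]; ring
      rcases eq_or_lt_of_le (hr j) with h0 | h0
      · rw [← h0]
        simp only [zero_mul, neg_zero, sub_zero, zero_add, sub_zero]
        exact div_nonneg (by linarith [hqpos j]) hL.le
      · have hq := hqpos j
        have hlog := Real.log_le_sub_one_of_pos (div_pos hq h0)
        rw [Real.log_div hq.ne' h0.ne'] at hlog
        have hstep : r j * (Real.log (qStar A j) - Real.log (r j)) ≤ qStar A j - r j := by
          have h := mul_le_mul_of_nonneg_left hlog (hr j)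
          calc r j * (Real.log (qStar A j) - Real.log (r j))
              ≤ r j * (qStar A j / r j - 1) := h
            _ = qStar A j - r j := by field_simp
        have hfin : r j * (Real.log (qStar A j) - Real.log (r j)) / Real.log 2
            ≤ (qStar A j - r j) / Real.log 2 := by gcongr
        calc -(r j * Real.logb 2 (r j)) - r j * Kvec A j
            = r j * Real.logb 2 S
              + (r j * Real.logb 2 (qStar A j) - r j * Real.logb 2 (r j)) := by
              rw [hKeq]; ring
          _ = r j * Real.logb 2 S
              + r j * (Real.log (qStar A j) - Real.log (r j)) / Real.log 2 := by
              rw [Real.logb, Real.logb, Real.logb]; ring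
          _ ≤ r j * Real.logb 2 S + (qStar A j - r j) / Real.log 2 := by linarith
    calc -(∑ j, r j * Real.logb 2 (r j)) - ∑ j, r j * Kvec A j
        = ∑ j, (-(r j * Real.logb 2 (r j)) - r j * Kvec A j) := by
          rw [Finset.sum_sub_distrib, Finset.sum_neg_distrib]
      _ ≤ ∑ j, (r j * Real.logb 2 S + (qStar A j - r j) / Real.log 2) :=
          Finset.sum_le_sum fun j _ => key j
      _ = Real.logb 2 S := by
          rw [Finset.sum_add_distrib, ← Finset.sum_mul, hr1, ← Finset.sum_div,
            Finset.sum_sub_distrib, hqsum, hr1]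
          simp
  -- K bounds
  have hKub : ∀ j, Kvec A j ≤ Kmax A := fun j =>
    le_ciSup (Set.Finite.bddAbove (Set.finite_range _)) j
  have hKlb : ∀ j, Kmin A ≤ Kvec A j := fun j =>
    ciInf_le (Set.Finite.bddBelow (Set.finite_range _)) j
  have hqratio : ∀ i j, qStar A j ≤ (2:ℝ) ^ (Kmax A - Kmin A) * qStar A i := by
    intro i j
    have h1 : (2:ℝ) ^ (-Kvec A j) ≤ (2:ℝ) ^ (Kmax A - Kmin A + -Kvec A i) :=
      (Real.rpow_le_rpow_left_iff (by norm_num)).mpr (by linarith [hKub i, hKlb j])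
    rw [Real.rpow_add (by norm_num)] at h1
    rw [qStar, qStar, ← hSdef]
    calc (2:ℝ) ^ (-Kvec A j) / S
        ≤ ((2:ℝ) ^ (Kmax A - Kmin A) * (2:ℝ) ^ (-Kvec A i)) / S := by gcongr
      _ = (2:ℝ) ^ (Kmax A - Kmin A) * ((2:ℝ) ^ (-Kvec A i) / S) := by ring
  -- pStar facts
  have hpstar_apply : ∀ i, pStar A i = ∑ j, A⁻¹ j i * qStar A j := by
    intro i; simp [pStar, Matrix.mulVec, dotProduct, transpose_apply]
  have hA1 : A *ᵥ (fun _ => (1:ℝ)) = fun _ => 1 := by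
    funext i; simp [Matrix.mulVec, dotProduct, hst.2 i]
  have hONE : A⁻¹ *ᵥ (fun _ => (1:ℝ)) = fun _ => 1 := by
    calc A⁻¹ *ᵥ (fun _ => (1:ℝ)) = A⁻¹ *ᵥ (A *ᵥ fun _ => 1) := by rw [hA1]
      _ = (A⁻¹ * A) *ᵥ (fun _ => 1) := Matrix.mulVec_mulVec _ _ _
      _ = fun _ => 1 := by rw [Matrix.nonsing_inv_mul A hdet, Matrix.one_mulVec]
  have hinvrow : ∀ j, ∑ i, A⁻¹ j i = (1:ℝ) := by
    intro j
    have h := congrFun hONE j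
    simpa [Matrix.mulVec, dotProduct] using h
  have hpsum : ∑ i, pStar A i = 1 := by
    calc ∑ i, pStar A i = ∑ i, ∑ j, A⁻¹ j i * qStar A j :=
          Finset.sum_congr rfl fun i _ => hpstar_apply i
      _ = ∑ j, ∑ i, A⁻¹ j i * qStar A j := Finset.sum_comm
      _ = ∑ j, qStar A j := by
          refine Finset.sum_congr rfl fun j _ => ?_
          rw [← Finset.sum_mul, hinvrow, one_mul]
      _ = 1 := hqsum
  have hpnn : ∀ i, 0 ≤ pStar A i := by
    intro i
    set Δ : ℝ := Kmax A - Kmin A with hΔ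
    set D : ℝ := ∑ j ∈ Finset.univ.erase i, |A⁻¹ j i| with hD
    have hDnn : 0 ≤ D := Finset.sum_nonneg fun j _ => abs_nonneg _
    have hpow : (0:ℝ) < (2:ℝ) ^ Δ := Real.rpow_pos_of_pos (by norm_num) _
    have hprod : (0:ℝ) < ((n:ℝ) - 1) * (2:ℝ) ^ Δ := mul_pos (by linarith) hpow
    have hDpos : 0 < D := by
      rcases eq_or_lt_of_le hDnn with h | h
      · exfalso
        have hci := hc i
        rw [← hD, ← h, div_zero] at hci
        linarith
      · exact h
    have hAii : ((n:ℝ) - 1) * (2:ℝ) ^ Δ * D ≤ A⁻¹ i i := by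
      have hci := hc i
      rw [← hD] at hci
      exact (le_div_iff₀ hDpos).mp hci
    have h3 : (2:ℝ) ^ Δ * D ≤ A⁻¹ i i := by nlinarith [mul_nonneg hpow.le hDnn]
    have hoffterm : ∀ j ∈ Finset.univ.erase i,
        -(|A⁻¹ j i| * ((2:ℝ) ^ Δ * qStar A i)) ≤ A⁻¹ j i * qStar A j := by
      intro j _
      have h1 : -(|A⁻¹ j i| * qStar A j) ≤ A⁻¹ j i * qStar A j := by
        have := mul_le_mul_of_nonneg_right (neg_abs_le (A⁻¹ j i)) (hqpos j).le
        linarith [this]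
      have h2 : |A⁻¹ j i| * qStar A j ≤ |A⁻¹ j i| * ((2:ℝ) ^ Δ * qStar A i) :=
        mul_le_mul_of_nonneg_left (hqratio i j) (abs_nonneg _)
      linarith
    have hsum : ∑ j ∈ Finset.univ.erase i, -(|A⁻¹ j i| * ((2:ℝ) ^ Δ * qStar A i))
        = -((2:ℝ) ^ Δ * qStar A i * D) := by
      rw [Finset.sum_neg_distrib, ← Finset.sum_mul, ← hD]; ring
    have hoff : -((2:ℝ) ^ Δ * qStar A i * D)
        ≤ ∑ j ∈ Finset.univ.erase i, A⁻¹ j i * qStar A j := by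
      rw [← hsum]; exact Finset.sum_le_sum hoffterm
    have hsplit : pStar A i
        = A⁻¹ i i * qStar A i + ∑ j ∈ Finset.univ.erase i, A⁻¹ j i * qStar A j := by
      rw [hpstar_apply i, ← Finset.add_sum_erase _ _ (Finset.mem_univ i)]
    rw [hsplit]
    nlinarith [mul_nonneg (sub_nonneg.mpr h3) (hqpos i).le]
  -- equality at pStar
  have hApstar : Aᵀ *ᵥ pStar A = qStar A := by
    rw [pStar, Matrix.mulVec_mulVec, ← Matrix.transpose_mul, Matrix.nonsing_inv_mul A hdet,
      Matrix.transpose_one, Matrix.one_mulVec]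
  have hUeq : mutualInfo A (pStar A) = Ubound A := by
    rw [mutualInfo, Ubound, hApstar]
  have hUval : Ubound A = Real.logb 2 S := by
    rw [← hUeq, hMI (pStar A), hApstar]
    have h := fun j => hlogq j
    have e0 : ∀ j, qStar A j * Real.logb 2 (qStar A j)
        = qStar A j * (-Kvec A j - Real.logb 2 S) := fun j => by rw [hlogq j]
    rw [Finset.sum_congr rfl fun j _ => e0 j]
    have e1 : ∑ j, qStar A j * (-Kvec A j - Real.logb 2 S)
        = -(∑ j, qStar A j * Kvec A j) - Real.logb 2 S := by
      simp only [mul_sub, mul_neg]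
      rw [Finset.sum_sub_distrib, Finset.sum_neg_distrib, ← Finset.sum_mul, hqsum, one_mul]
    rw [e1]; ring
  -- the supremum
  have hub : ∀ x ∈ {x : ℝ | ∃ p : Fin n → ℝ, IsPmf p ∧ mutualInfo A p = x},
      x ≤ Ubound A := by
    rintro x ⟨p, ⟨hp0, hp1⟩, rfl⟩
    rw [hMI p, hUval]
    apply hGibbs
    · intro j
      simp only [Matrix.mulVec, dotProduct, transpose_apply]
      exact Finset.sum_nonneg fun i _ => mul_nonneg (hst.1 i j) (hp0 i)
    · calc ∑ j, (Aᵀ *ᵥ p) j = ∑ j, ∑ i, A i j * p i := by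
            simp [Matrix.mulVec, dotProduct]
        _ = ∑ i, ∑ j, A i j * p i := Finset.sum_comm
        _ = ∑ i, p i := by
            refine Finset.sum_congr rfl fun i _ => ?_
            rw [← Finset.sum_mul, hst.2 i, one_mul]
        _ = 1 := hp1
  have hmem : Ubound A ∈ {x : ℝ | ∃ p : Fin n → ℝ, IsPmf p ∧ mutualInfo A p = x} :=
    ⟨pStar A, ⟨hpnn, hpsum⟩, hUeq⟩
  rw [capacity]
  exact le_antisymm (csSup_le ⟨_, hmem⟩ hub) (le_csSup ⟨_, hub⟩ hmem)
end

section
/- Let n ≥ 2 and let A be an n×n row-stochastic strictly diagonally dominant positive real matrix. Then K_max − K_min ≤ n · H_max(A) · V / σ_min(A), where V = c_min(A)/(c_min(A) − 1). -/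
open Matrix Finset Real

section Helpers

lemma star_eq_transpose_real {n : ℕ} (U : Matrix (Fin n) (Fin n) ℝ) : star U = Uᵀ := by
  ext i j
  simp [Matrix.star_apply]

lemma rayleigh_lower {n : ℕ} (M : Matrix (Fin n) (Fin n) ℝ) (hM : M.IsHermitian)
    [Nonempty (Fin n)] (x : Fin n → ℝ) :
    (⨅ i, hM.eigenvalues i) * (x ⬝ᵥ x) ≤ x ⬝ᵥ (M *ᵥ x) := by
  set U : Matrix (Fin n) (Fin n) ℝ := (hM.eigenvectorUnitary : Matrix (Fin n) (Fin n) ℝ) with hU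
  have hUst : star U = Uᵀ := star_eq_transpose_real U
  set y : Fin n → ℝ := Uᵀ *ᵥ x with hy
  have hx_vecMul : x ᵥ* U = y := by rw [hy, Matrix.mulVec_transpose]
  have hUU : U * star U = 1 := (Matrix.mem_unitaryGroup_iff).mp hM.eigenvectorUnitary.2
  have hdiag : Matrix.diagonal (RCLike.ofReal ∘ hM.eigenvalues) =
      Matrix.diagonal hM.eigenvalues := by congr 1
  have h2 : x ⬝ᵥ x = ∑ j, y j ^ 2 := by
    have : x ⬝ᵥ x = x ⬝ᵥ ((U * Uᵀ) *ᵥ x) := by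
      rw [← hUst, hUU, Matrix.one_mulVec]
    rw [this, ← Matrix.mulVec_mulVec, Matrix.dotProduct_mulVec, hx_vecMul]
    simp [dotProduct, sq]
    rfl
  have h1 : x ⬝ᵥ (M *ᵥ x) = ∑ j, hM.eigenvalues j * y j ^ 2 := by
    conv_lhs => rw [hM.spectral_theorem, Unitary.conjStarAlgAut_apply]
    rw [hUst, hdiag, ← Matrix.mulVec_mulVec, Matrix.dotProduct_mulVec,
      ← Matrix.vecMul_vecMul, hx_vecMul]
    simp [dotProduct, Matrix.vecMul_diagonal, sq]
    apply Finset.sum_congr rfl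
    intro j _
    ring
  rw [h1, h2, Finset.mul_sum]
  apply Finset.sum_le_sum
  intro j _
  exact mul_le_mul_of_nonneg_right
    (ciInf_le (Set.Finite.bddBelow (Set.finite_range _)) j) (sq_nonneg _)

end Helpers

theorem Kmax_sub_Kmin_le {n : ℕ} (hn : 2 ≤ n) (A : Matrix (Fin n) (Fin n) ℝ)
    (hst : RowStochastic A) (hA : SDDPos A) :
    Kmax A - Kmin A ≤ (n : ℝ) * Hmax A * (cmin A / (cmin A - 1)) / sigmaMin A := by
  have hnpos : 0 < n := lt_of_lt_of_le two_pos hn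
  haveI : NeZero n := ⟨hnpos.ne'⟩
  haveI : Nonempty (Fin n) := ⟨⟨0, hnpos⟩⟩
  haveI : Nontrivial (Fin n) := Fin.nontrivial_iff_two_le.mpr hn
  -- invertibility
  have hdet : A.det ≠ 0 := by
    apply det_ne_zero_of_sum_row_lt_diag
    intro k
    simp only [Real.norm_eq_abs]
    calc ∑ j ∈ Finset.univ.erase k, |A k j| = ∑ j ∈ Finset.univ.erase k, A k j := by
          exact Finset.sum_congr rfl fun j _ => abs_of_pos (hA.1 k j)
      _ < A k k := hA.2 k
      _ ≤ |A k k| := le_abs_self _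
  have hunit : IsUnit A.det := isUnit_iff_ne_zero.mpr hdet
  have hinv_mul : A⁻¹ * A = 1 := Matrix.nonsing_inv_mul A hunit
  have hmul_inv : A * A⁻¹ = 1 := Matrix.mul_nonsing_inv A hunit
  -- row sums of A⁻¹ are 1
  have hA1 : A *ᵥ (fun _ => (1 : ℝ)) = fun _ => (1 : ℝ) := by
    funext i
    simp only [Matrix.mulVec, dotProduct, mul_one]
    exact hst.2 i
  have hAinv1 : A⁻¹ *ᵥ (fun _ => (1 : ℝ)) = fun _ => (1 : ℝ) := by
    conv_lhs => rw [← hA1, Matrix.mulVec_mulVec, hinv_mul, Matrix.one_mulVec]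
  have hrowsum : ∀ j, ∑ i, A⁻¹ j i = 1 := by
    intro j
    have := congrFun hAinv1 j
    simpa [Matrix.mulVec, dotProduct] using this
  -- entropy bounds
  have hentry_le : ∀ i k, A i k ≤ 1 := by
    intro i k
    calc A i k ≤ ∑ j, A i j :=
          Finset.single_le_sum (fun j _ => (hA.1 i j).le) (Finset.mem_univ k)
      _ = 1 := hst.2 i
  have hH0 : ∀ i, 0 ≤ rowEntropy A i := by
    intro i
    rw [rowEntropy, neg_nonneg]
    apply Finset.sum_nonpos
    intro k _
    exact mul_nonpos_of_nonneg_of_nonpos (hA.1 i k).le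
      (Real.logb_nonpos one_lt_two (hA.1 i k).le (hentry_le i k))
  have hHle : ∀ i, rowEntropy A i ≤ Hmax A := fun i =>
    le_ciSup (Set.Finite.bddAbove (Set.finite_range _)) i
  have hHmax0 : 0 ≤ Hmax A := le_trans (hH0 (Classical.arbitrary _)) (hHle _)
  set c : ℝ := Hmax A / 2 with hc
  have hc0 : 0 ≤ c := by positivity
  have hgabs : ∀ i, |rowEntropy A i - c| ≤ c := by
    intro i
    rw [abs_le]
    constructor
    · linarith [hH0 i]
    · have := hHle i; rw [hc]; linarith
  -- eigenvalue facts
  set lam : ℝ := ⨅ i, (Matrix.isHermitian_conjTranspose_mul_self A).eigenvalues i with hlam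
  have hlampos : 0 < lam := by
    obtain ⟨i0, hi0⟩ := Finite.exists_min (Matrix.isHermitian_conjTranspose_mul_self A).eigenvalues
    have hle : (Matrix.isHermitian_conjTranspose_mul_self A).eigenvalues i0 ≤ lam := le_ciInf hi0
    have hnonneg : 0 ≤ (Matrix.isHermitian_conjTranspose_mul_self A).eigenvalues i0 :=
      Matrix.eigenvalues_conjTranspose_mul_self_nonneg A i0
    have hdetM : (Aᴴ * A).det ≠ 0 := by
      rw [Matrix.det_mul, Matrix.det_conjTranspose, star_trivial]
      exact mul_ne_zero hdet hdet
    have hprod : (Aᴴ * A).det = ∏ i, (Matrix.isHermitian_conjTranspose_mul_self A).eigenvalues i := by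
      simpa using (Matrix.isHermitian_conjTranspose_mul_self A).det_eq_prod_eigenvalues
    have hne : (Matrix.isHermitian_conjTranspose_mul_self A).eigenvalues i0 ≠ 0 := by
      intro h0
      apply hdetM
      rw [hprod]
      exact Finset.prod_eq_zero (Finset.mem_univ i0) h0
    have : 0 < (Matrix.isHermitian_conjTranspose_mul_self A).eigenvalues i0 :=
      lt_of_le_of_ne hnonneg (Ne.symm hne)
    linarith
  have hsig : sigmaMin A = Real.sqrt lam := rfl
  have hsigpos : 0 < sigmaMin A := by rw [hsig]; exact Real.sqrt_pos.mpr hlampos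
  have hsigsq : sigmaMin A ^ 2 = lam := by rw [hsig]; exact Real.sq_sqrt hlampos.le
  -- cmin > 1
  have hcmin1 : 1 < cmin A := by
    obtain ⟨i0, hi0⟩ := Finite.exists_min
      (fun i => A i i / ∑ j ∈ Finset.univ.erase i, |A i j|)
    have hle : A i0 i0 / ∑ j ∈ Finset.univ.erase i0, |A i0 j| ≤ cmin A := le_ciInf hi0
    have hRpos : 0 < ∑ j ∈ Finset.univ.erase i0, |A i0 j| := by
      obtain ⟨j, hj⟩ := exists_ne i0
      apply Finset.sum_pos' (fun k _ => abs_nonneg _)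
      exact ⟨j, Finset.mem_erase.mpr ⟨hj, Finset.mem_univ j⟩, abs_pos.mpr (hA.1 i0 j).ne'⟩
    have hRlt : ∑ j ∈ Finset.univ.erase i0, |A i0 j| < A i0 i0 := by
      calc ∑ j ∈ Finset.univ.erase i0, |A i0 j| = ∑ j ∈ Finset.univ.erase i0, A i0 j :=
            Finset.sum_congr rfl fun j _ => abs_of_pos (hA.1 i0 j)
        _ < A i0 i0 := hA.2 i0
    have : 1 < A i0 i0 / ∑ j ∈ Finset.univ.erase i0, |A i0 j| :=
      (one_lt_div hRpos).mpr hRlt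
    linarith
  have hV1 : 1 ≤ cmin A / (cmin A - 1) := by
    rw [le_div_iff₀ (by linarith)]
    linarith
  -- the key bound
  set g : Fin n → ℝ := fun i => rowEntropy A i - c with hg
  set y : Fin n → ℝ := A⁻¹ *ᵥ g with hy
  have hAy : A *ᵥ y = g := by
    rw [hy, Matrix.mulVec_mulVec, hmul_inv, Matrix.one_mulVec]
  have hKy : ∀ j, Kvec A j = y j + c := by
    intro j
    have : y j = ∑ i, A⁻¹ j i * (rowEntropy A i - c) := rfl
    rw [this]
    have : ∑ i, A⁻¹ j i * (rowEntropy A i - c)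
        = (∑ i, A⁻¹ j i * rowEntropy A i) - c * ∑ i, A⁻¹ j i := by
      rw [Finset.mul_sum, ← Finset.sum_sub_distrib]
      exact Finset.sum_congr rfl fun i _ => by ring
    rw [this, hrowsum j, Kvec]
    ring
  set B : ℝ := Real.sqrt n * c / sigmaMin A with hB
  have hB0 : 0 ≤ B := by positivity
  have hyB : ∀ j, |y j| ≤ B := by
    intro j
    have hray : lam * (y ⬝ᵥ y) ≤ (A *ᵥ y) ⬝ᵥ (A *ᵥ y) := by
      have := rayleigh_lower (Aᴴ * A) (Matrix.isHermitian_conjTranspose_mul_self A) y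
      rw [← hlam] at this
      have hAH : Aᴴ = Aᵀ := star_eq_transpose_real A
      have heq : y ⬝ᵥ ((Aᴴ * A) *ᵥ y) = (A *ᵥ y) ⬝ᵥ (A *ᵥ y) := by
        rw [hAH, ← Matrix.mulVec_mulVec, Matrix.dotProduct_mulVec, Matrix.vecMul_transpose]
      rwa [heq] at this
    have hgg : (A *ᵥ y) ⬝ᵥ (A *ᵥ y) ≤ n * c ^ 2 := by
      rw [hAy]
      have : g ⬝ᵥ g = ∑ i, g i ^ 2 := by simp [dotProduct, sq]
      rw [this]
      calc ∑ i, g i ^ 2 ≤ ∑ _i : Fin n, c ^ 2 := by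
            apply Finset.sum_le_sum
            intro i _
            have := hgabs i
            nlinarith [abs_nonneg (g i), sq_abs (g i)]
        _ = n * c ^ 2 := by simp [mul_comm]
    have hyj : y j ^ 2 ≤ y ⬝ᵥ y := by
      have : y ⬝ᵥ y = ∑ i, y i ^ 2 := by simp [dotProduct, sq]
      rw [this]
      exact Finset.single_le_sum (fun i _ => sq_nonneg (y i)) (Finset.mem_univ j)
    have hyy : y ⬝ᵥ y ≤ n * c ^ 2 / lam := by
      rw [le_div_iff₀ hlampos]
      calc y ⬝ᵥ y * lam = lam * (y ⬝ᵥ y) := by ring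
        _ ≤ (A *ᵥ y) ⬝ᵥ (A *ᵥ y) := hray
        _ ≤ n * c ^ 2 := hgg
    have hsq : y j ^ 2 ≤ B ^ 2 := by
      have hBsq : B ^ 2 = n * c ^ 2 / lam := by
        rw [hB, div_pow, mul_pow, Real.sq_sqrt (Nat.cast_nonneg n), hsigsq]
      rw [hBsq]
      exact le_trans hyj hyy
    calc |y j| = Real.sqrt (y j ^ 2) := (Real.sqrt_sq_eq_abs _).symm
      _ ≤ Real.sqrt (B ^ 2) := Real.sqrt_le_sqrt hsq
      _ = B := Real.sqrt_sq hB0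
  -- assemble
  have hKmax : Kmax A ≤ c + B := by
    apply ciSup_le
    intro j
    rw [hKy j]
    have := (abs_le.mp (hyB j)).2
    linarith
  have hKmin : c - B ≤ Kmin A := by
    apply le_ciInf
    intro j
    rw [hKy j]
    have := (abs_le.mp (hyB j)).1
    linarith
  have hmain : Kmax A - Kmin A ≤ 2 * B := by linarith
  refine le_trans hmain ?_
  rw [hB, hc]
  have hsqrtn : Real.sqrt n ≤ n := by
    have h1 : (n : ℝ) ≤ (n : ℝ) ^ 2 := by nlinarith [show (1:ℝ) ≤ n from Nat.one_le_cast.mpr hnpos]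
    calc Real.sqrt n ≤ Real.sqrt ((n : ℝ) ^ 2) := Real.sqrt_le_sqrt h1
      _ = n := Real.sqrt_sq (Nat.cast_nonneg n)
  have key : Real.sqrt n * Hmax A ≤ (n : ℝ) * Hmax A * (cmin A / (cmin A - 1)) := by
    calc Real.sqrt n * Hmax A ≤ (n : ℝ) * Hmax A :=
          mul_le_mul_of_nonneg_right hsqrtn hHmax0
      _ = (n : ℝ) * Hmax A * 1 := by ring
      _ ≤ (n : ℝ) * Hmax A * (cmin A / (cmin A - 1)) := by
          apply mul_le_mul_of_nonneg_left hV1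
          positivity
  have h2B : 2 * (Real.sqrt n * (Hmax A / 2) / sigmaMin A)
      = Real.sqrt n * Hmax A / sigmaMin A := by ring
  rw [h2B]
  gcongr
end

section
/- Let n ≥ 2 and let A be an n×n row-stochastic strictly diagonally dominant positive real matrix. Then σ_min(A) ≥ (c_min(A) − n/2)/(c_min(A) + 1). -/
open Matrix Finset Real

lemma swap_erase_sum {n : ℕ} (f : Fin n → Fin n → ℝ) :
    ∑ i, ∑ j ∈ Finset.univ.erase i, f i j = ∑ j, ∑ i ∈ Finset.univ.erase j, f i j := by
  have h1 : ∀ i : Fin n,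
      ∑ j ∈ Finset.univ.erase i, f i j = ∑ j, if j = i then 0 else f i j := by
    intro i
    rw [← Finset.sum_erase (Finset.univ) (a := i) (by simp)]
    exact Finset.sum_congr rfl fun j hj => by simp [Finset.mem_erase.1 hj |>.1]
  have h2 : ∀ j : Fin n,
      ∑ i ∈ Finset.univ.erase j, f i j = ∑ i, if j = i then 0 else f i j := by
    intro j
    rw [← Finset.sum_erase (Finset.univ) (a := j)
      (f := fun i => if j = i then 0 else f i j) (by simp)]
    refine Finset.sum_congr rfl fun i hi => ?_
    have h3 : ¬(j = i) := fun h => (Finset.mem_erase.1 hi |>.1) h.symm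
    simp [h3]
  simp only [h1]
  rw [Finset.sum_comm]
  exact Finset.sum_congr rfl fun j _ => (h2 j).symm

lemma quad_lower {n : ℕ} (hn : 2 ≤ n) (A : Matrix (Fin n) (Fin n) ℝ)
    (hst : RowStochastic A) (hA : SDDPos A) (v : Fin n → ℝ) :
    (cmin A - (n : ℝ) / 2) / (cmin A + 1) * (∑ i, v i ^ 2)
      ≤ ∑ i, ∑ j, v i * A i j * v j := by
  have hne : Nonempty (Fin n) := ⟨⟨0, by omega⟩⟩
  set c := cmin A with hc
  set R : Fin n → ℝ := fun i => ∑ j ∈ Finset.univ.erase i, A i j with hRdef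
  have hRpos : ∀ i, 0 < R i := by
    intro i
    have hcard : 1 < (Finset.univ : Finset (Fin n)).card := by
      rw [Finset.card_univ, Fintype.card_fin]; omega
    rcases Finset.exists_mem_ne hcard i with ⟨j, _, hj⟩
    have hj : j ∈ Finset.univ.erase i := Finset.mem_erase.2 ⟨hj, Finset.mem_univ j⟩
    exact Finset.sum_pos' (fun k _ => (hA.1 i k).le) ⟨j, hj, hA.1 i j⟩
  have habs : ∀ i, (∑ j ∈ Finset.univ.erase i, |A i j|) = R i := by
    intro i
    exact Finset.sum_congr rfl fun j _ => abs_of_pos (hA.1 i j)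
  have hcle : ∀ i, c ≤ A i i / R i := by
    intro i
    have := ciInf_le (f := fun i => A i i / ∑ j ∈ Finset.univ.erase i, |A i j|)
      (Set.finite_range _).bddBelow i
    rwa [habs i] at this
  have hc1 : 1 ≤ c := by
    refine le_ciInf fun i => ?_
    rw [habs i, le_div_iff₀ (hRpos i), one_mul]
    exact (hA.2 i).le
  have hc0 : 0 < c + 1 := by linarith
  have hrow : ∀ i, A i i + R i = 1 := by
    intro i
    rw [hRdef]
    rw [Finset.add_sum_erase Finset.univ (A i) (Finset.mem_univ i)]
    exact hst.2 i
  have hcR : ∀ i, c * R i ≤ A i i := by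
    intro i
    have := hcle i
    rw [le_div_iff₀ (hRpos i)] at this
    linarith
  have hRle : ∀ i, R i ≤ 1 / (c + 1) := by
    intro i
    rw [le_div_iff₀ hc0]
    have := hcR i
    have := hrow i
    nlinarith
  have hAii : ∀ i, c / (c + 1) ≤ A i i := by
    intro i
    have h1 : 1 - 1 / (c + 1) = c / (c + 1) := by field_simp; ring
    have := hRle i
    have := hrow i
    linarith
  have hoff : ∀ i j, j ≠ i → A i j ≤ 1 / (c + 1) := by
    intro i j hji
    refine le_trans ?_ (hRle i)
    exact Finset.single_le_sum (f := A i) (fun k _ => (hA.1 i k).le)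
      (Finset.mem_erase.2 ⟨hji, Finset.mem_univ j⟩)
  -- column sums
  have hcol : ∀ j, (∑ i ∈ Finset.univ.erase j, A i j) ≤ ((n : ℝ) - 1) / (c + 1) := by
    intro j
    calc ∑ i ∈ Finset.univ.erase j, A i j
        ≤ ∑ i ∈ Finset.univ.erase j, 1 / (c + 1) := by
          refine Finset.sum_le_sum fun i hi => ?_
          exact hoff i j (fun h => (Finset.mem_erase.1 hi).1 (by rw [h]))
      _ = ((n : ℝ) - 1) / (c + 1) := by
          rw [Finset.sum_const, Finset.card_erase_of_mem (Finset.mem_univ j),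
            Finset.card_univ, Fintype.card_fin]
          rw [nsmul_eq_mul]
          have : ((n - 1 : ℕ) : ℝ) = (n : ℝ) - 1 := by
            rw [Nat.cast_sub (by omega)]; norm_num
          rw [this]; ring
  -- split the quadratic form
  have hsplit : ∑ i, ∑ j, v i * A i j * v j
      = ∑ i, (A i i * v i ^ 2 + ∑ j ∈ Finset.univ.erase i, v i * A i j * v j) := by
    refine Finset.sum_congr rfl fun i _ => ?_
    rw [← Finset.add_sum_erase Finset.univ (fun j => v i * A i j * v j) (Finset.mem_univ i)]
    ring_nf
  have hOT : ∀ i, -(∑ j ∈ Finset.univ.erase i, A i j * (v i ^ 2 + v j ^ 2) / 2)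
      ≤ ∑ j ∈ Finset.univ.erase i, v i * A i j * v j := by
    intro i
    rw [← Finset.sum_neg_distrib]
    refine Finset.sum_le_sum fun j _ => ?_
    have h0 := (hA.1 i j).le
    nlinarith [sq_nonneg (v i + v j)]
  have hT : ∑ i, ∑ j ∈ Finset.univ.erase i, A i j * (v i ^ 2 + v j ^ 2) / 2
      = (∑ i, R i * v i ^ 2 / 2)
        + ∑ j, (∑ i ∈ Finset.univ.erase j, A i j) * v j ^ 2 / 2 := by
    have e1 : ∀ i j : Fin n, A i j * (v i ^ 2 + v j ^ 2) / 2
        = A i j * v i ^ 2 / 2 + A i j * v j ^ 2 / 2 := fun i j => by ring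
    simp only [e1, Finset.sum_add_distrib]
    congr 1
    · refine Finset.sum_congr rfl fun i _ => ?_
      rw [hRdef, Finset.sum_mul, Finset.sum_div]
    · rw [swap_erase_sum (fun i j => A i j * v j ^ 2 / 2)]
      refine Finset.sum_congr rfl fun j _ => ?_
      rw [Finset.sum_mul, Finset.sum_div]
  -- combine
  have hcoef : ∀ i, (c - (n : ℝ) / 2) / (c + 1) * v i ^ 2
      = c / (c + 1) * v i ^ 2 - (1 / (c + 1)) * v i ^ 2 / 2
        - (((n : ℝ) - 1) / (c + 1)) * v i ^ 2 / 2 := by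
    intro i
    field_simp
    ring
  rw [hsplit, Finset.mul_sum]
  have step : ∀ i, (c - (n : ℝ) / 2) / (c + 1) * v i ^ 2
      ≤ A i i * v i ^ 2 - R i * v i ^ 2 / 2
        - (∑ k ∈ Finset.univ.erase i, A k i) * v i ^ 2 / 2 := by
    intro i
    rw [hcoef i]
    have hv2 : (0 : ℝ) ≤ v i ^ 2 := sq_nonneg _
    have b1 : R i * v i ^ 2 ≤ (1 / (c + 1)) * v i ^ 2 :=
      mul_le_mul_of_nonneg_right (hRle i) hv2
    have b2 : (∑ k ∈ Finset.univ.erase i, A k i) * v i ^ 2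
        ≤ (((n : ℝ) - 1) / (c + 1)) * v i ^ 2 :=
      mul_le_mul_of_nonneg_right (hcol i) hv2
    have b3 : c / (c + 1) * v i ^ 2 ≤ A i i * v i ^ 2 :=
      mul_le_mul_of_nonneg_right (hAii i) hv2
    linarith
  calc ∑ i, (c - (n : ℝ) / 2) / (c + 1) * v i ^ 2
      ≤ ∑ i, (A i i * v i ^ 2 - R i * v i ^ 2 / 2
          - (∑ k ∈ Finset.univ.erase i, A k i) * v i ^ 2 / 2) :=
        Finset.sum_le_sum fun i _ => step i
    _ = (∑ i, A i i * v i ^ 2)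
        - ((∑ i, R i * v i ^ 2 / 2)
          + ∑ j, (∑ i ∈ Finset.univ.erase j, A i j) * v j ^ 2 / 2) := by
        rw [Finset.sum_sub_distrib, Finset.sum_sub_distrib]; ring
    _ = (∑ i, A i i * v i ^ 2)
        - ∑ i, ∑ j ∈ Finset.univ.erase i, A i j * (v i ^ 2 + v j ^ 2) / 2 := by rw [hT]
    _ ≤ ∑ i, (A i i * v i ^ 2 + ∑ j ∈ Finset.univ.erase i, v i * A i j * v j) := by
        rw [Finset.sum_add_distrib]
        have := Finset.sum_le_sum (s := Finset.univ) fun i (_ : i ∈ Finset.univ) => hOT i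
        simp only [Finset.sum_neg_distrib] at this
        linarith

theorem sigma_min_lower_bound {n : ℕ} (hn : 2 ≤ n) (A : Matrix (Fin n) (Fin n) ℝ)
    (hst : RowStochastic A) (hA : SDDPos A) :
    (cmin A - (n : ℝ) / 2) / (cmin A + 1) ≤ sigmaMin A := by
  have hne : Nonempty (Fin n) := ⟨⟨0, by omega⟩⟩
  set b := (cmin A - (n : ℝ) / 2) / (cmin A + 1) with hb
  unfold sigmaMin
  by_cases hb0 : b ≤ 0
  · exact hb0.trans (Real.sqrt_nonneg _)
  push_neg at hb0
  set h := Matrix.isHermitian_conjTranspose_mul_self A with hh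
  have key : ∀ i, b ^ 2 ≤ h.eigenvalues i := by
    intro i
    set v : Fin n → ℝ := ⇑(h.eigenvectorBasis i) with hv
    have hnorm : ∑ k, v k ^ 2 = 1 := by
      have h1 : ‖h.eigenvectorBasis i‖ = 1 := h.eigenvectorBasis.orthonormal.1 i
      rw [EuclideanSpace.norm_eq] at h1
      rw [Real.sqrt_eq_one] at h1
      simp only [Real.norm_eq_abs, sq_abs] at h1
      exact h1
    have heig : (Aᴴ * A) *ᵥ v = h.eigenvalues i • v := h.mulVec_eigenvectorBasis i
    have hmu : ((Aᴴ * A) *ᵥ v) ⬝ᵥ v = h.eigenvalues i := by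
      rw [heig]
      simp only [dotProduct, Pi.smul_apply, smul_eq_mul]
      have e : ∑ x, h.eigenvalues i * v x * v x = h.eigenvalues i * ∑ x, v x ^ 2 := by
        rw [Finset.mul_sum]; exact Finset.sum_congr rfl fun k _ => by ring
      rw [e, hnorm, mul_one]
    have hexpand : ((Aᴴ * A) *ᵥ v) ⬝ᵥ v = (A *ᵥ v) ⬝ᵥ (A *ᵥ v) := by
      rw [Matrix.conjTranspose_eq_transpose_of_trivial, ← Matrix.mulVec_mulVec,
        dotProduct_comm, Matrix.dotProduct_mulVec, Matrix.vecMul_transpose]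
    have hmu2 : h.eigenvalues i = ∑ m, (A *ᵥ v) m ^ 2 := by
      rw [← hmu, hexpand]
      simp only [dotProduct]
      exact Finset.sum_congr rfl fun m _ => (sq _).symm
    have hq : b ≤ ∑ k, v k * (A *ᵥ v) k := by
      have := quad_lower hn A hst hA v
      rw [hnorm, mul_one] at this
      refine this.trans_eq ?_
      refine Finset.sum_congr rfl fun k _ => ?_
      simp only [Matrix.mulVec, dotProduct, Finset.mul_sum]
      exact Finset.sum_congr rfl fun j _ => by ring
    have hcs : (∑ k, v k * (A *ᵥ v) k) ^ 2 ≤ (∑ k, v k ^ 2) * ∑ k, (A *ᵥ v) k ^ 2 :=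
      Finset.sum_mul_sq_le_sq_mul_sq Finset.univ v (A *ᵥ v)
    rw [hnorm, one_mul] at hcs
    have hbq : b ^ 2 ≤ (∑ k, v k * (A *ᵥ v) k) ^ 2 := pow_le_pow_left₀ hb0.le hq 2
    rw [hmu2]
    exact hbq.trans hcs
  have hinf : b ^ 2 ≤ ⨅ i, h.eigenvalues i := le_ciInf key
  calc b = Real.sqrt (b ^ 2) := (Real.sqrt_sq hb0.le).symm
    _ ≤ Real.sqrt (⨅ i, h.eigenvalues i) := Real.sqrt_le_sqrt hinf
end

section
/- Let n ≥ 2 and let A be an n×n row-stochastic strictly diagonally dominant positive real matrix with c_min(A) ≥ n − 1. Then the maximum row entropy satisfies H_max(A) ≤ log₂(c_min(A)+1) + (log₂(n−1) − c_min(A)·log₂ c_min(A))/(c_min(A)+1). -/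
open Matrix Finset Real

lemma gibbs_s18 {n : ℕ} (p q : Fin n → ℝ) (hp : ∀ k, 0 < p k) (hq : ∀ k, 0 < q k)
    (hps : ∑ k, p k = 1) (hqs : ∑ k, q k = 1) :
    -∑ k, p k * Real.logb 2 (p k) ≤ -∑ k, p k * Real.logb 2 (q k) := by
  rw [neg_le_neg_iff]
  have key : ∀ k : Fin n, p k * Real.logb 2 (q k) - p k * Real.logb 2 (p k)
      ≤ (q k - p k) / Real.log 2 := by
    intro k
    have h1 : Real.log (q k / p k) ≤ q k / p k - 1 :=
      Real.log_le_sub_one_of_pos (div_pos (hq k) (hp k))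
    have h2 : p k * Real.log (q k / p k) ≤ q k - p k := by
      have := mul_le_mul_of_nonneg_left h1 (hp k).le
      calc p k * Real.log (q k / p k) ≤ p k * (q k / p k - 1) := this
        _ = q k - p k := by rw [mul_sub, mul_div_cancel₀ _ (hp k).ne', mul_one]
    have hlog2 : (0:ℝ) < Real.log 2 := Real.log_pos one_lt_two
    have heq : p k * Real.logb 2 (q k) - p k * Real.logb 2 (p k)
        = (p k * Real.log (q k / p k)) / Real.log 2 := by
      rw [Real.log_div (hq k).ne' (hp k).ne', Real.logb, Real.logb]; ring
    rw [heq]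
    gcongr
  have hsum := Finset.sum_le_sum (fun k (_ : k ∈ Finset.univ) => key k)
  rw [Finset.sum_sub_distrib] at hsum
  have hz : ∑ k, (q k - p k) / Real.log 2 = 0 := by
    rw [← Finset.sum_div, Finset.sum_sub_distrib, hps, hqs]
    simp
  linarith

theorem Hmax_upper_bound {n : ℕ} (hn : 2 ≤ n) (A : Matrix (Fin n) (Fin n) ℝ)
    (hst : RowStochastic A) (hA : SDDPos A) (hc : (n : ℝ) - 1 ≤ cmin A) :
    Hmax A ≤ Real.logb 2 (cmin A + 1) +
      (Real.logb 2 ((n : ℝ) - 1) - cmin A * Real.logb 2 (cmin A)) / (cmin A + 1) := by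
  obtain ⟨hpos, hsdd⟩ := hA
  obtain ⟨_, hrow⟩ := hst
  have hn0 : 0 < n := by omega
  have hne : Nonempty (Fin n) := ⟨⟨0, hn0⟩⟩
  set c := cmin A with hcdef
  have hn1 : (1:ℝ) ≤ (n:ℝ) - 1 := by
    have : (2:ℝ) ≤ (n:ℝ) := by exact_mod_cast hn
    linarith
  have hc1 : (1:ℝ) ≤ c := le_trans hn1 hc
  have hc0 : (0:ℝ) < c := by linarith
  have hc10 : (0:ℝ) < c + 1 := by linarith
  have hn10 : (0:ℝ) < (n:ℝ) - 1 := by linarith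
  have hL1 : 0 ≤ Real.logb 2 ((n:ℝ)-1) := Real.logb_nonneg one_lt_two hn1
  have hL2 : 0 ≤ Real.logb 2 c := Real.logb_nonneg one_lt_two hc1
  apply ciSup_le
  intro i
  set a := A i i with hadef
  set s := ∑ j ∈ Finset.univ.erase i, A i j with hsdef
  have habs : ∑ j ∈ Finset.univ.erase i, |A i j| = s :=
    Finset.sum_congr rfl (fun j _ => abs_of_pos (hpos i j))
  have hs_pos : 0 < s := by
    apply Finset.sum_pos (fun j _ => hpos i j)
    have : ∃ j : Fin n, j ≠ i := by
      by_contra h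
      push_neg at h
      have h2 : Fintype.card (Fin n) ≤ 1 := Fintype.card_le_one_iff.mpr (fun x y => (h x).trans (h y).symm)
      simp at h2; omega
    obtain ⟨j, hj⟩ := this
    exact ⟨j, Finset.mem_erase.mpr ⟨hj, Finset.mem_univ j⟩⟩
  have has : a + s = 1 := by
    rw [hsdef, hadef, Finset.add_sum_erase _ _ (Finset.mem_univ i)]
    exact hrow i
  have hci : c ≤ a / s := by
    have h := ciInf_le (Finite.bddBelow_range _) i
      (f := fun i => A i i / ∑ j ∈ Finset.univ.erase i, |A i j|)
    rw [habs] at h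
    exact h
  have hcs : c * s ≤ a := (le_div_iff₀ hs_pos).mp hci
  have hs_le : s ≤ 1 / (c + 1) := by rw [le_div_iff₀ hc10]; nlinarith
  have ha_ge : c / (c + 1) ≤ a := by rw [div_le_iff₀ hc10]; nlinarith
  set q : Fin n → ℝ := fun j => if j = i then c / (c + 1) else 1 / ((c + 1) * ((n:ℝ) - 1)) with hqdef
  have hq_pos : ∀ k, 0 < q k := by
    intro k
    simp only [hqdef]
    split
    · positivity
    · positivity
  have herase : ∀ {f : Fin n → ℝ} (C : ℝ), (∀ j ∈ Finset.univ.erase i, f j = C) →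
      ∑ j ∈ Finset.univ.erase i, f j = ((n:ℝ) - 1) * C := by
    intro f C hf
    rw [Finset.sum_congr rfl hf, Finset.sum_const,
      Finset.card_erase_of_mem (Finset.mem_univ i), Finset.card_univ, Fintype.card_fin,
      nsmul_eq_mul]
    congr 1
    push_cast [Nat.cast_sub hn0]
    ring
  have hq_sum : ∑ k, q k = 1 := by
    rw [← Finset.add_sum_erase _ q (Finset.mem_univ i),
      herase (1 / ((c + 1) * ((n:ℝ) - 1))) (fun j hj => if_neg (Finset.ne_of_mem_erase hj))]
    simp only [hqdef, if_pos rfl]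
    field_simp
  have hgibbs := gibbs_s18 (fun k => A i k) q (fun k => hpos i k) hq_pos (hrow i) hq_sum
  have hsplit : ∑ k, A i k * Real.logb 2 (q k)
      = a * Real.logb 2 (c / (c + 1)) + s * Real.logb 2 (1 / ((c + 1) * ((n:ℝ) - 1))) := by
    rw [← Finset.add_sum_erase _ _ (Finset.mem_univ i)]
    congr 1
    · simp [hqdef, hadef]
    · have hcongr : ∀ j ∈ Finset.univ.erase i, A i j * Real.logb 2 (q j)
          = A i j * Real.logb 2 (1 / ((c + 1) * ((n:ℝ) - 1))) := by
        intro j hj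
        simp only [hqdef, if_neg (Finset.ne_of_mem_erase hj)]
      rw [Finset.sum_congr rfl hcongr, ← Finset.sum_mul]
  have hlog1 : Real.logb 2 (c / (c + 1)) = Real.logb 2 c - Real.logb 2 (c + 1) :=
    Real.logb_div hc0.ne' hc10.ne'
  have hlog2 : Real.logb 2 (1 / ((c + 1) * ((n:ℝ) - 1)))
      = -(Real.logb 2 (c + 1) + Real.logb 2 ((n:ℝ) - 1)) := by
    rw [one_div, Real.logb_inv, Real.logb_mul hc10.ne' hn10.ne']
  have hbound : rowEntropy A i ≤ Real.logb 2 (c + 1) - a * Real.logb 2 c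
      + s * Real.logb 2 ((n:ℝ) - 1) := by
    rw [rowEntropy]
    refine le_trans hgibbs ?_
    rw [hsplit, hlog1, hlog2]
    have hh : a * Real.logb 2 (c + 1) + s * Real.logb 2 (c + 1) = Real.logb 2 (c + 1) := by
      rw [← add_mul, has, one_mul]
    nlinarith [hh]
  have h1 : s * Real.logb 2 ((n:ℝ) - 1) ≤ (1 / (c + 1)) * Real.logb 2 ((n:ℝ) - 1) :=
    mul_le_mul_of_nonneg_right hs_le hL1
  have h2 : (c / (c + 1)) * Real.logb 2 c ≤ a * Real.logb 2 c :=
    mul_le_mul_of_nonneg_right ha_ge hL2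
  have heq : Real.logb 2 (c + 1) + (Real.logb 2 ((n:ℝ) - 1) - c * Real.logb 2 c) / (c + 1)
      = Real.logb 2 (c + 1) - (c / (c + 1)) * Real.logb 2 c
        + (1 / (c + 1)) * Real.logb 2 ((n:ℝ) - 1) := by
    field_simp
    ring
  rw [heq]
  linarith [hbound]
end
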